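/- arXiv:0807.3980 — 4 statements merged into one kernel-verified Lean document; each statement's English description precedes it below -/
import Mathlib

section
/- Let Γ be a discrete subgroup of SL₂(ℝ)×SL₂(ℝ) that contains an element of infinite order and that acts properly discontinuously on SL₂(ℝ) by (γ₁,γ₂)·g = γ₁gγ₂⁻¹. Then either all but finitely many (γ₁,γ₂) ∈ Γ satisfy ‖γ₂‖ < ‖γ₁‖, or all but finitely many (γ₁,γ₂) ∈ Γ satisfy ‖γ₁‖ < ‖γ₂‖. -/
/-!
STATEMENT 4: if a discrete subgroup Γ of SL₂(ℝ)×SL₂(ℝ) contains an element of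
infinite order and acts properly discontinuously on SL₂(ℝ) by (γ₁,γ₂)·g = γ₁gγ₂⁻¹,
then either almost all (γ₁,γ₂) ∈ Γ satisfy ‖γ₂‖ < ‖γ₁‖, or almost all satisfy
‖γ₁‖ < ‖γ₂‖.
-/

open Matrix

/-- `SL₂(ℝ)`. -/
abbrev SL2R := Matrix.SpecialLinearGroup (Fin 2) ℝ

/-- The topology on SL₂(ℝ) as a subset of the 2×2 real matrices. -/
instance : TopologicalSpace SL2R :=
  TopologicalSpace.induced (fun g => (g : Matrix (Fin 2) (Fin 2) ℝ)) inferInstance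

/-- The operator norm of `g ∈ SL₂(ℝ)` acting on Euclidean ℝ². -/
noncomputable def sl2OpNorm (g : SL2R) : ℝ :=
  ‖Matrix.toEuclideanCLM (𝕜 := ℝ) (g : Matrix (Fin 2) (Fin 2) ℝ)‖

namespace Aux

noncomputable abbrev φm := Matrix.toEuclideanCLM (𝕜 := ℝ) (n := Fin 2)

lemma coord_abs_le (y : EuclideanSpace ℝ (Fin 2)) (i : Fin 2) : |y i| ≤ ‖y‖ := by
  have h := EuclideanSpace.norm_eq y
  have h2 : |y i|^2 ≤ ∑ j, ‖y j‖^2 := by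
    have := Finset.single_le_sum (f := fun j => ‖y j‖^2) (fun j _ => by positivity)
      (Finset.mem_univ i)
    simpa [Real.norm_eq_abs, sq_abs] using this
  calc |y i| = Real.sqrt (|y i|^2) := by rw [Real.sqrt_sq_eq_abs, abs_abs]
  _ ≤ Real.sqrt (∑ j, ‖y j‖^2) := Real.sqrt_le_sqrt h2
  _ = ‖y‖ := h.symm

lemma clm_apply_coord (M : Matrix (Fin 2) (Fin 2) ℝ) (x : EuclideanSpace ℝ (Fin 2)) (i : Fin 2) :
    (φm M x) i = M.mulVec (fun j => x j) i := rfl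

lemma entry_abs_le (M : Matrix (Fin 2) (Fin 2) ℝ) (i j : Fin 2) : |M i j| ≤ ‖φm M‖ := by
  have hx : ‖(EuclideanSpace.single j (1:ℝ))‖ = 1 := by
    simp [EuclideanSpace.norm_single]
  have h1 : (φm M (EuclideanSpace.single j (1:ℝ))) i = M i j := by
    rw [clm_apply_coord]
    have : (fun k => (EuclideanSpace.single j (1:ℝ)) k) = Pi.single j (1:ℝ) := by
      funext k; simp [EuclideanSpace.single_apply, Pi.single_apply, eq_comm]
    rw [this]
    simp [Matrix.mulVec_single]
  calc |M i j| = |(φm M (EuclideanSpace.single j (1:ℝ))) i| := by rw [h1]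
  _ ≤ ‖φm M (EuclideanSpace.single j (1:ℝ))‖ := coord_abs_le _ _
  _ ≤ ‖φm M‖ * ‖(EuclideanSpace.single j (1:ℝ))‖ := (φm M).le_opNorm _
  _ = ‖φm M‖ := by rw [hx, mul_one]

def IsOrth (u : SL2R) : Prop := (u : Matrix (Fin 2) (Fin 2) ℝ)ᵀ * u = 1

lemma sl2OpNorm_def (g : SL2R) : sl2OpNorm g = ‖φm (g : Matrix (Fin 2) (Fin 2) ℝ)‖ := rfl

lemma sl2_norm_mul_le (g h : SL2R) : sl2OpNorm (g*h) ≤ sl2OpNorm g * sl2OpNorm h := by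
  simp only [sl2OpNorm_def, Matrix.SpecialLinearGroup.coe_mul, _root_.map_mul]
  exact norm_mul_le _ _

lemma sl2OpNorm_one : sl2OpNorm 1 = 1 := by
  simp only [sl2OpNorm_def, Matrix.SpecialLinearGroup.coe_one, _root_.map_one]
  exact norm_one

lemma isUnitary (u : SL2R) (hu : IsOrth u) :
    star (φm (u : Matrix (Fin 2) (Fin 2) ℝ)) * φm (u : Matrix (Fin 2) (Fin 2) ℝ) = 1 := by
  rw [← map_star, ← _root_.map_mul]
  have : star (u : Matrix (Fin 2) (Fin 2) ℝ) = (u : Matrix (Fin 2) (Fin 2) ℝ)ᵀ := rfl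
  rw [this, hu, _root_.map_one]

lemma orth_norm (u : SL2R) (hu : IsOrth u) : sl2OpNorm u = 1 := by
  have h1 := isUnitary u hu
  have := CStarRing.norm_star_mul_self (x := φm (u : Matrix (Fin 2) (Fin 2) ℝ))
  rw [h1, norm_one] at this
  have h0 : (0:ℝ) ≤ sl2OpNorm u := norm_nonneg _
  rw [sl2OpNorm_def]
  nlinarith [sl2OpNorm_def u]

lemma orth_inv_coe (u : SL2R) (hu : IsOrth u) :
    ((u⁻¹ : SL2R) : Matrix (Fin 2) (Fin 2) ℝ) = (u : Matrix (Fin 2) (Fin 2) ℝ)ᵀ := by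
  have hdet : ((u : Matrix (Fin 2) (Fin 2) ℝ)ᵀ).det = 1 := by
    rw [Matrix.det_transpose]; exact u.2
  have : u⁻¹ = (⟨(u : Matrix (Fin 2) (Fin 2) ℝ)ᵀ, hdet⟩ : SL2R) := by
    apply inv_eq_of_mul_eq_one_right
    apply Subtype.ext
    show (u : Matrix (Fin 2) (Fin 2) ℝ) * (u : Matrix (Fin 2) (Fin 2) ℝ)ᵀ = 1
    rw [mul_eq_one_comm]
    exact hu
  rw [this]

lemma orth_inv (u : SL2R) (hu : IsOrth u) : IsOrth u⁻¹ := by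
  unfold IsOrth
  rw [orth_inv_coe u hu, Matrix.transpose_transpose, mul_eq_one_comm]
  exact hu

lemma orth_mul (u v : SL2R) (hu : IsOrth u) (hv : IsOrth v) : IsOrth (u*v) := by
  unfold IsOrth at *
  have hc : ((u*v : SL2R) : Matrix (Fin 2) (Fin 2) ℝ) = (u : Matrix (Fin 2) (Fin 2) ℝ) * (v : Matrix (Fin 2) (Fin 2) ℝ) := rfl
  rw [hc, Matrix.transpose_mul]
  calc (v : Matrix (Fin 2) (Fin 2) ℝ)ᵀ * (u:Matrix (Fin 2) (Fin 2) ℝ)ᵀ * ((u:Matrix (Fin 2) (Fin 2) ℝ) * (v:Matrix (Fin 2) (Fin 2) ℝ))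
      = (v : Matrix (Fin 2) (Fin 2) ℝ)ᵀ * ((u:Matrix (Fin 2) (Fin 2) ℝ)ᵀ * (u:Matrix (Fin 2) (Fin 2) ℝ)) * (v:Matrix (Fin 2) (Fin 2) ℝ) := by rw [Matrix.mul_assoc, Matrix.mul_assoc, Matrix.mul_assoc]
  _ = 1 := by rw [hu, mul_one, hv]

lemma norm_mul_orth (x u : SL2R) (hu : IsOrth u) : sl2OpNorm (x * u) = sl2OpNorm x := by
  apply le_antisymm
  · calc sl2OpNorm (x*u) ≤ sl2OpNorm x * sl2OpNorm u := sl2_norm_mul_le _ _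
    _ = sl2OpNorm x := by rw [orth_norm u hu, mul_one]
  · calc sl2OpNorm x = sl2OpNorm (x * u * u⁻¹) := by group
    _ ≤ sl2OpNorm (x*u) * sl2OpNorm u⁻¹ := sl2_norm_mul_le _ _
    _ = sl2OpNorm (x*u) := by rw [orth_norm _ (orth_inv u hu), mul_one]

lemma norm_orth_mul (x u : SL2R) (hu : IsOrth u) : sl2OpNorm (u * x) = sl2OpNorm x := by
  apply le_antisymm
  · calc sl2OpNorm (u*x) ≤ sl2OpNorm u * sl2OpNorm x := sl2_norm_mul_le _ _
    _ = sl2OpNorm x := by rw [orth_norm u hu, one_mul]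
  · calc sl2OpNorm x = sl2OpNorm (u⁻¹ * (u * x)) := by group
    _ ≤ sl2OpNorm u⁻¹ * sl2OpNorm (u*x) := sl2_norm_mul_le _ _
    _ = sl2OpNorm (u*x) := by rw [orth_norm _ (orth_inv u hu), one_mul]

lemma diag_norm (s : ℝ) (hs : 0 < s) (a : SL2R)
    (ha : (a : Matrix (Fin 2) (Fin 2) ℝ) = Matrix.diagonal ![s, s⁻¹]) :
    sl2OpNorm a = max s s⁻¹ := by
  have hsi : 0 < s⁻¹ := by positivity
  set b := max s s⁻¹ with hb
  have hbpos : 0 < b := lt_max_of_lt_left hs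
  apply le_antisymm
  · rw [sl2OpNorm_def]
    apply ContinuousLinearMap.opNorm_le_bound _ hbpos.le
    intro x
    rw [EuclideanSpace.norm_eq, EuclideanSpace.norm_eq]
    have hcoord : ∀ i : Fin 2, (φm (a : Matrix (Fin 2) (Fin 2) ℝ) x) i = ![s, s⁻¹] i * x i := by
      intro i
      rw [clm_apply_coord, ha, Matrix.mulVec_diagonal]
    rw [← Real.sqrt_sq hbpos.le, ← Real.sqrt_mul (by positivity)]
    apply Real.sqrt_le_sqrt
    rw [Fin.sum_univ_two, Fin.sum_univ_two, hcoord 0, hcoord 1]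
    have h0 : s ≤ b := le_max_left _ _
    have h1 : s⁻¹ ≤ b := le_max_right _ _
    simp only [Real.norm_eq_abs, Matrix.cons_val_zero, Matrix.cons_val_one, Matrix.head_cons,
      sq_abs]
    have hs2 : s^2 ≤ b^2 := by nlinarith
    have hs2i : s⁻¹^2 ≤ b^2 := by nlinarith
    nlinarith [sq_nonneg (x 0), sq_nonneg (x 1)]
  · apply max_le
    · have h := entry_abs_le (a : Matrix (Fin 2) (Fin 2) ℝ) 0 0
      rw [← sl2OpNorm_def] at h
      have he : (a : Matrix (Fin 2) (Fin 2) ℝ) 0 0 = s := by rw [ha]; simp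
      rwa [he, abs_of_pos hs] at h
    · have h := entry_abs_le (a : Matrix (Fin 2) (Fin 2) ℝ) 1 1
      rw [← sl2OpNorm_def] at h
      have he : (a : Matrix (Fin 2) (Fin 2) ℝ) 1 1 = s⁻¹ := by rw [ha]; simp
      rwa [he, abs_of_pos hsi] at h
lemma transpose_lit (a b c d : ℝ) : (!![a,b;c,d])ᵀ = !![a,c;b,d] := by
  ext i j; fin_cases i <;> fin_cases j <;> rfl

lemma diag_lit (x y : ℝ) : Matrix.diagonal ![x, y] = !![x,0;0,y] := by
  ext i j; fin_cases i <;> fin_cases j <;> simp [Matrix.diagonal_apply]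

lemma det_diag_two (x y : ℝ) : (Matrix.diagonal ![x, y]).det = x * y := by
  rw [Matrix.det_diagonal, Fin.prod_univ_two]
  simp

lemma diag_inv_coe (s : ℝ) (hs : s ≠ 0) (a : SL2R)
    (ha : (a : Matrix (Fin 2) (Fin 2) ℝ) = Matrix.diagonal ![s, s⁻¹]) :
    ((a⁻¹ : SL2R) : Matrix (Fin 2) (Fin 2) ℝ) = Matrix.diagonal ![s⁻¹, s] := by
  have hdet : (Matrix.diagonal ![s⁻¹, s]).det = 1 := by
    rw [det_diag_two]; field_simp
  have : a⁻¹ = (⟨Matrix.diagonal ![s⁻¹, s], hdet⟩ : SL2R) := by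
    apply inv_eq_of_mul_eq_one_right
    apply Subtype.ext
    show (a : Matrix (Fin 2) (Fin 2) ℝ) * Matrix.diagonal ![s⁻¹, s] = 1
    rw [ha, diag_lit, diag_lit, Matrix.mul_fin_two]
    field_simp
    rw [Matrix.one_fin_two]; simp
  rw [this]

set_option maxHeartbeats 2000000 in
theorem sl2_svd (g : SL2R) : ∃ (u a v : SL2R) (s : ℝ), 1 ≤ s ∧ IsOrth u ∧ IsOrth v ∧
    (a : Matrix (Fin 2) (Fin 2) ℝ) = Matrix.diagonal ![s, s⁻¹] ∧ g = u * a * v := by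
  obtain ⟨M, hdet⟩ := g
  set g : SL2R := ⟨M, hdet⟩ with hg
  set R : ℝ → Matrix (Fin 2) (Fin 2) ℝ :=
    fun θ => !![Real.cos θ, -Real.sin θ; Real.sin θ, Real.cos θ] with hR
  have hRT : ∀ θ, (R θ)ᵀ = !![Real.cos θ, Real.sin θ; -Real.sin θ, Real.cos θ] := by
    intro θ; rw [hR, transpose_lit]
  have hpyth : ∀ θ : ℝ, Real.sin θ * Real.sin θ + Real.cos θ * Real.cos θ = 1 := by
    intro θ
    nlinarith [Real.sin_sq_add_cos_sq θ]
  have hRdet : ∀ θ, (R θ).det = 1 := by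
    intro θ
    rw [hR, Matrix.det_fin_two_of]
    nlinarith [hpyth θ]
  have hRorth : ∀ θ, (R θ)ᵀ * R θ = 1 := by
    intro θ
    rw [hRT, hR, Matrix.mul_fin_two, Matrix.one_fin_two]
    ext i j
    fin_cases i <;> fin_cases j <;> simp <;> nlinarith [hpyth θ]
  -- the symmetric matrix p = MᵀM as a literal
  set pa : ℝ := M 0 0 * M 0 0 + M 1 0 * M 1 0 with hpa
  set pb : ℝ := M 0 0 * M 0 1 + M 1 0 * M 1 1 with hpb
  set pd : ℝ := M 0 1 * M 0 1 + M 1 1 * M 1 1 with hpd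
  have hp2 : Mᵀ * M = !![pa, pb; pb, pd] := by
    ext i j
    fin_cases i <;> fin_cases j <;>
      simp [Matrix.mul_apply, Fin.sum_univ_two, Matrix.transpose_apply, hpa, hpb, hpd] <;> ring
  -- the conjugated matrix q θ as a literal
  have hqlit : ∀ θ : ℝ, (R θ)ᵀ * (Mᵀ * M) * R θ =
      !![(Real.cos θ * pa + Real.sin θ * pb) * Real.cos θ
          + (Real.cos θ * pb + Real.sin θ * pd) * Real.sin θ,
         (Real.cos θ * pa + Real.sin θ * pb) * (-Real.sin θ)
          + (Real.cos θ * pb + Real.sin θ * pd) * Real.cos θ;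
         (-Real.sin θ * pa + Real.cos θ * pb) * Real.cos θ
          + (-Real.sin θ * pb + Real.cos θ * pd) * Real.sin θ,
         (-Real.sin θ * pa + Real.cos θ * pb) * (-Real.sin θ)
          + (-Real.sin θ * pb + Real.cos θ * pd) * Real.cos θ] := by
    intro θ
    rw [hp2, hRT, hR, Matrix.mul_fin_two, Matrix.mul_fin_two]
  set off : ℝ → ℝ := fun θ => ((R θ)ᵀ * (Mᵀ * M) * R θ) 0 1 with hoff
  have hoffform : ∀ θ, off θ = pb * (Real.cos θ^2 - Real.sin θ^2)
      + (pd - pa) * (Real.sin θ * Real.cos θ) := by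
    intro θ
    rw [hoff]
    simp only [hqlit θ]
    simp
    ring
  have hcont : Continuous off := by
    have : off = fun θ => pb * (Real.cos θ^2 - Real.sin θ^2)
      + (pd - pa) * (Real.sin θ * Real.cos θ) := funext hoffform
    rw [this]; fun_prop
  have h0 : off 0 = pb := by rw [hoffform]; simp
  have hpi : off (Real.pi/2) = - pb := by
    rw [hoffform]; simp [Real.cos_pi_div_two, Real.sin_pi_div_two]
  have hmem : (0:ℝ) ∈ Set.uIcc (off 0) (off (Real.pi/2)) := by
    rw [h0, hpi]
    rcases le_total 0 pb with h | h
    · exact Set.mem_uIcc.2 (Or.inr ⟨by linarith, h⟩)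
    · exact Set.mem_uIcc.2 (Or.inl ⟨h, by linarith⟩)
  obtain ⟨θ, _, hθ⟩ := intermediate_value_uIcc (f := off) (a := 0) (b := Real.pi/2)
    hcont.continuousOn hmem
  set q : Matrix (Fin 2) (Fin 2) ℝ := (R θ)ᵀ * (Mᵀ * M) * R θ with hq
  have hq01 : q 0 1 = 0 := hθ
  have hq10 : q 1 0 = 0 := by
    have h1 : q 1 0 = q 0 1 := by
      simp only [hq, hqlit θ]
      simp
      ring
    rw [h1, hq01]
  have hfact : q = (M * R θ)ᵀ * (M * R θ) := by
    rw [Matrix.transpose_mul, hq]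
    noncomm_ring
  have hq00nonneg : 0 ≤ q 0 0 := by
    rw [hfact]
    simp only [Matrix.mul_apply, Fin.sum_univ_two, Matrix.transpose_apply]
    nlinarith [sq_nonneg ((M*R θ) 0 0), sq_nonneg ((M*R θ) 1 0)]
  have hqdet : q.det = 1 := by
    rw [hq, Matrix.det_mul, Matrix.det_mul, Matrix.det_transpose, hRdet, Matrix.det_mul,
      Matrix.det_transpose, hdet]
    ring
  have hprod : q 0 0 * q 1 1 = 1 := by
    have := Matrix.det_fin_two q
    rw [hqdet, hq01] at this
    nlinarith [this]
  have hq00pos : 0 < q 0 0 := by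
    rcases hq00nonneg.lt_or_eq with h | h
    · exact h
    · exfalso; rw [← h] at hprod; simp at hprod
  clear_value q
  clear hoffform hcont h0 hpi hmem hθ hq hqlit hoff
  set s0 : ℝ := Real.sqrt (q 0 0) with hs0def
  have hs0pos : 0 < s0 := Real.sqrt_pos.2 hq00pos
  have hs0sq : s0^2 = q 0 0 := Real.sq_sqrt hq00nonneg
  have h2 : s0 * s0 = q 0 0 := by rw [← hs0sq]; ring
  have hq00ne : q 0 0 ≠ 0 := ne_of_gt hq00pos
  have hq11 : q 1 1 = (s0*s0)⁻¹ := by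
    rw [h2]
    field_simp
    linear_combination hprod
  have hqex : q = Matrix.diagonal ![s0*s0, (s0*s0)⁻¹] := by
    have hz : !![q 0 0, q 0 1; q 1 0, q 1 1] = !![q 0 0, 0; 0, q 1 1] := by
      rw [hq01, hq10]
    rw [diag_lit, ← hq11, h2, ← hz]
    exact Matrix.eta_fin_two q
  have hs0ne : s0 ≠ 0 := ne_of_gt hs0pos
  have hA0det : (Matrix.diagonal ![s0, s0⁻¹]).det = 1 := by
    rw [det_diag_two]; field_simp
  set V0 : SL2R := ⟨R θ, hRdet θ⟩ with hV0
  set A0 : SL2R := ⟨Matrix.diagonal ![s0, s0⁻¹], hA0det⟩ with hA0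
  set U0 : SL2R := g * V0 * A0⁻¹ with hU0
  have hV0orth : IsOrth V0 := hRorth θ
  have hA0coe : (A0 : Matrix (Fin 2) (Fin 2) ℝ) = Matrix.diagonal ![s0, s0⁻¹] := rfl
  have hA0inv : ((A0⁻¹ : SL2R) : Matrix (Fin 2) (Fin 2) ℝ) = Matrix.diagonal ![s0⁻¹, s0] :=
    diag_inv_coe s0 hs0ne A0 rfl
  have hU0coe : (U0 : Matrix (Fin 2) (Fin 2) ℝ)
      = M * R θ * Matrix.diagonal ![s0⁻¹, s0] := by
    rw [hU0]
    rw [Matrix.SpecialLinearGroup.coe_mul, Matrix.SpecialLinearGroup.coe_mul, hA0inv]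
  have hU0orth : IsOrth U0 := by
    unfold IsOrth
    rw [hU0coe, Matrix.transpose_mul, Matrix.diagonal_transpose]
    have hassoc : Matrix.diagonal ![s0⁻¹, s0] * (M * R θ)ᵀ
        * (M * R θ * Matrix.diagonal ![s0⁻¹, s0])
        = Matrix.diagonal ![s0⁻¹, s0] * ((M * R θ)ᵀ * (M * R θ))
          * Matrix.diagonal ![s0⁻¹, s0] := by
      noncomm_ring
    rw [hassoc, ← hfact, hqex, Matrix.diagonal_mul_diagonal, Matrix.diagonal_mul_diagonal]
    ext i j
    fin_cases i <;> fin_cases j <;>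
      simp [Matrix.diagonal_apply, Matrix.one_apply] <;> field_simp
  have hprodg : g = U0 * A0 * V0⁻¹ := by
    rw [hU0]; group
  rcases le_or_gt 1 s0 with hs1 | hs1
  · exact ⟨U0, A0, V0⁻¹, s0, hs1, hU0orth, orth_inv V0 hV0orth, hA0coe, hprodg⟩
  · have hρdet : (!![0,-1;1,0] : Matrix (Fin 2) (Fin 2) ℝ).det = 1 := by
      rw [Matrix.det_fin_two_of]; norm_num
    set ρ : SL2R := ⟨!![0,-1;1,0], hρdet⟩ with hρ
    have hρorth : IsOrth ρ := by
      unfold IsOrth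
      show (!![0,-1;1,0] : Matrix (Fin 2) (Fin 2) ℝ)ᵀ * !![0,-1;1,0] = 1
      rw [transpose_lit, Matrix.mul_fin_two, Matrix.one_fin_two]
      norm_num
    have hρinv : ((ρ⁻¹ : SL2R) : Matrix (Fin 2) (Fin 2) ℝ) = !![0,1;-1,0] := by
      rw [orth_inv_coe ρ hρorth]
      show (!![0,-1;1,0] : Matrix (Fin 2) (Fin 2) ℝ)ᵀ = _
      rw [transpose_lit]
    have hs11 : 1 ≤ s0⁻¹ := by
      have hinv : s0 * s0⁻¹ = 1 := mul_inv_cancel₀ hs0ne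
      nlinarith [hinv, hs0pos]
    have hA1coe : ((ρ * A0 * ρ⁻¹ : SL2R) : Matrix (Fin 2) (Fin 2) ℝ)
        = Matrix.diagonal ![s0⁻¹, (s0⁻¹)⁻¹] := by
      rw [Matrix.SpecialLinearGroup.coe_mul, Matrix.SpecialLinearGroup.coe_mul, hρinv, hA0coe]
      have : ((ρ : SL2R) : Matrix (Fin 2) (Fin 2) ℝ) = !![0,-1;1,0] := rfl
      rw [this, diag_lit, diag_lit, inv_inv, Matrix.mul_fin_two, Matrix.mul_fin_two]
      norm_num
    refine ⟨U0 * ρ⁻¹, ρ * A0 * ρ⁻¹, ρ * V0⁻¹, s0⁻¹, hs11,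
      orth_mul _ _ hU0orth (orth_inv ρ hρorth),
      orth_mul _ _ hρorth (orth_inv V0 hV0orth), hA1coe, ?_⟩
    rw [hprodg]; group
lemma sl2_norm_of_svd (g u a v : SL2R) (s : ℝ) (hs : 1 ≤ s) (hu : IsOrth u) (hv : IsOrth v)
    (ha : (a : Matrix (Fin 2) (Fin 2) ℝ) = Matrix.diagonal ![s, s⁻¹]) (hg : g = u * a * v) :
    sl2OpNorm g = s := by
  have hspos : (0:ℝ) < s := lt_of_lt_of_le one_pos hs
  rw [hg, norm_mul_orth _ _ hv, norm_orth_mul _ _ hu, diag_norm s hspos a ha]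
  have : s⁻¹ ≤ s := by
    have h1 : s⁻¹ ≤ 1 := by
      have := mul_inv_cancel₀ (ne_of_gt hspos)
      nlinarith
    linarith
  exact max_eq_left this

lemma one_le_sl2OpNorm (g : SL2R) : 1 ≤ sl2OpNorm g := by
  obtain ⟨u, a, v, s, hs, hu, hv, ha, hg⟩ := sl2_svd g
  rw [sl2_norm_of_svd g u a v s hs hu hv ha hg]
  exact hs

lemma sl2OpNorm_pos (g : SL2R) : 0 < sl2OpNorm g :=
  lt_of_lt_of_le one_pos (one_le_sl2OpNorm g)

lemma sl2OpNorm_inv (g : SL2R) : sl2OpNorm g⁻¹ = sl2OpNorm g := by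
  obtain ⟨u, a, v, s, hs, hu, hv, ha, hg⟩ := sl2_svd g
  have hspos : (0:ℝ) < s := lt_of_lt_of_le one_pos hs
  have hsne : s ≠ 0 := ne_of_gt hspos
  have hginv : g⁻¹ = v⁻¹ * a⁻¹ * u⁻¹ := by rw [hg]; group
  have hainv : ((a⁻¹ : SL2R) : Matrix (Fin 2) (Fin 2) ℝ)
      = Matrix.diagonal ![s⁻¹, (s⁻¹)⁻¹] := by
    rw [diag_inv_coe s hsne a ha, inv_inv]
  rw [hginv, norm_mul_orth _ _ (orth_inv u hu), norm_orth_mul _ _ (orth_inv v hv),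
    diag_norm s⁻¹ (by positivity) a⁻¹ hainv, inv_inv,
    sl2_norm_of_svd g u a v s hs hu hv ha hg]
  have h1 : s⁻¹ ≤ 1 := by
    have := mul_inv_cancel₀ hsne
    nlinarith
  exact max_eq_right (by linarith)


-- compactness of norm balls
lemma isCompact_ball (C : ℝ) : IsCompact {g : SL2R | sl2OpNorm g ≤ C} := by
  have hind : Topology.IsInducing (fun g : SL2R => (g : Matrix (Fin 2) (Fin 2) ℝ)) := ⟨rfl⟩
  rw [hind.isCompact_iff]
  have himage : (fun g : SL2R => (g : Matrix (Fin 2) (Fin 2) ℝ)) '' {g | sl2OpNorm g ≤ C}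
      = {M : Matrix (Fin 2) (Fin 2) ℝ | M.det = 1 ∧ ‖φm M‖ ≤ C} := by
    ext M
    constructor
    · rintro ⟨g, hg, rfl⟩
      exact ⟨g.2, hg⟩
    · rintro ⟨h1, h2⟩
      exact ⟨⟨M, h1⟩, h2, rfl⟩
  rw [himage]
  have hcont : Continuous (fun M : Matrix (Fin 2) (Fin 2) ℝ => φm M) := by
    let L : Matrix (Fin 2) (Fin 2) ℝ →ₗ[ℝ]
        (EuclideanSpace ℝ (Fin 2) →L[ℝ] EuclideanSpace ℝ (Fin 2)) :=
      { toFun := fun M => φm M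
        map_add' := fun x y => map_add _ x y
        map_smul' := fun c x => map_smul _ c x }
    exact L.continuous_of_finiteDimensional
  have hclosed : IsClosed {M : Matrix (Fin 2) (Fin 2) ℝ | M.det = 1 ∧ ‖φm M‖ ≤ C} := by
    apply IsClosed.inter
    · exact isClosed_eq (Continuous.matrix_det continuous_id) continuous_const
    · exact isClosed_le hcont.norm continuous_const
  apply IsCompact.of_isClosed_subset ?_ hclosed
  · intro M hM
    show M ∈ Set.univ.pi fun _ : Fin 2 => Set.univ.pi fun _ : Fin 2 => Set.Icc (-C) C
    intro i _
    intro j _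
    have h3 := abs_le.1 ((entry_abs_le M i j).trans hM.2)
    exact Set.mem_Icc.2 ⟨h3.1, h3.2⟩
  · exact isCompact_univ_pi fun _ => isCompact_univ_pi fun _ => isCompact_Icc

lemma factA (Γ : Subgroup (SL2R × SL2R))
    (hproper : ∀ K L : Set SL2R, IsCompact K → IsCompact L →
      {γ : Γ | ((fun g => (γ : SL2R × SL2R).1 * g * ((γ : SL2R × SL2R).2)⁻¹) '' K ∩ L).Nonempty}.Finite)
    (C : ℝ) (hC : 1 ≤ C) :
    {γ : SL2R × SL2R | γ ∈ Γ ∧ sl2OpNorm γ.1 ≤ C * sl2OpNorm γ.2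
      ∧ sl2OpNorm γ.2 ≤ C * sl2OpNorm γ.1}.Finite := by
  set K := {g : SL2R | sl2OpNorm g ≤ C} with hK
  have hfin := hproper K K (isCompact_ball C) (isCompact_ball C)
  apply Set.Finite.subset (hfin.image Subtype.val)
  rintro γ ⟨hmem, h12, h21⟩
  refine ⟨⟨γ, hmem⟩, ?_, rfl⟩
  show ((fun g => γ.1 * g * γ.2⁻¹) '' K ∩ K).Nonempty
  obtain ⟨u₁, a₁, v₁, s₁, hs₁, hu₁, hv₁, ha₁, hg₁⟩ := sl2_svd γ.1
  obtain ⟨u₂, a₂, v₂, s₂, hs₂, hu₂, hv₂, ha₂, hg₂⟩ := sl2_svd γ.2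
  have hs₁pos : (0:ℝ) < s₁ := lt_of_lt_of_le one_pos hs₁
  have hs₂pos : (0:ℝ) < s₂ := lt_of_lt_of_le one_pos hs₂
  have hs₁ne : s₁ ≠ 0 := ne_of_gt hs₁pos
  have hs₂ne : s₂ ≠ 0 := ne_of_gt hs₂pos
  have hn₁ : sl2OpNorm γ.1 = s₁ := sl2_norm_of_svd _ _ _ _ _ hs₁ hu₁ hv₁ ha₁ hg₁
  have hn₂ : sl2OpNorm γ.2 = s₂ := sl2_norm_of_svd _ _ _ _ _ hs₂ hu₂ hv₂ ha₂ hg₂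
  set t : ℝ := s₁⁻¹ * s₂ with ht
  have htpos : 0 < t := by positivity
  have htne : t ≠ 0 := ne_of_gt htpos
  set g : SL2R := v₁⁻¹ * (a₁⁻¹ * a₂) * v₂ with hgdef
  have hacoe : ((a₁⁻¹ * a₂ : SL2R) : Matrix (Fin 2) (Fin 2) ℝ)
      = Matrix.diagonal ![t, t⁻¹] := by
    rw [Matrix.SpecialLinearGroup.coe_mul, diag_inv_coe s₁ hs₁ne a₁ ha₁, ha₂,
      Matrix.diagonal_mul_diagonal]
    have hvec : (fun i => ![s₁⁻¹, s₁] i * ![s₂, s₂⁻¹] i) = ![t, t⁻¹] := by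
      funext i
      fin_cases i
      · show s₁⁻¹ * s₂ = t
        rw [ht]
      · show s₁ * s₂⁻¹ = t⁻¹
        rw [ht, mul_inv, inv_inv]
    rw [hvec]
  have hgnorm : sl2OpNorm g = max t t⁻¹ := by
    rw [hgdef, norm_mul_orth _ _ hv₂, norm_orth_mul _ _ (orth_inv v₁ hv₁)]
    exact diag_norm t htpos _ hacoe
  have htC : t ≤ C := by
    rw [hn₁, hn₂] at h21
    have h := mul_inv_cancel₀ hs₁ne
    have hi : 0 < s₁⁻¹ := by positivity
    nlinarith
  have htiC : t⁻¹ ≤ C := by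
    rw [hn₁, hn₂] at h12
    have hti : t⁻¹ = s₂⁻¹ * s₁ := by rw [ht, mul_inv, inv_inv]; ring
    have h := mul_inv_cancel₀ hs₂ne
    have hi : 0 < s₂⁻¹ := by positivity
    rw [hti]
    nlinarith
  have hgK : g ∈ K := by
    rw [hK]
    show sl2OpNorm g ≤ C
    rw [hgnorm]
    exact max_le htC htiC
  have himg : γ.1 * g * γ.2⁻¹ = u₁ * u₂⁻¹ := by
    rw [hgdef, hg₁, hg₂]
    group
  have hres : sl2OpNorm (u₁ * u₂⁻¹) ≤ C := by
    rw [norm_mul_orth _ _ (orth_inv u₂ hu₂), orth_norm u₁ hu₁]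
    exact hC
  exact ⟨u₁ * u₂⁻¹, ⟨g, hgK, himg⟩, hres⟩
lemma log_nonneg' (x : SL2R) : 0 ≤ Real.log (sl2OpNorm x) :=
  Real.log_nonneg (one_le_sl2OpNorm x)

lemma log_keyR (x y : SL2R) :
    |Real.log (sl2OpNorm (x*y)) - Real.log (sl2OpNorm x)| ≤ Real.log (sl2OpNorm y) := by
  have hxy := sl2OpNorm_pos (x*y)
  have hx := sl2OpNorm_pos x
  have hy := sl2OpNorm_pos y
  have h1 : Real.log (sl2OpNorm (x*y)) ≤ Real.log (sl2OpNorm x) + Real.log (sl2OpNorm y) := by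
    rw [← Real.log_mul (ne_of_gt hx) (ne_of_gt hy)]
    exact Real.log_le_log hxy (sl2_norm_mul_le x y)
  have h2 : Real.log (sl2OpNorm x) ≤ Real.log (sl2OpNorm (x*y)) + Real.log (sl2OpNorm y) := by
    have hx2 : sl2OpNorm x ≤ sl2OpNorm (x*y) * sl2OpNorm y := by
      have he : x = (x*y) * y⁻¹ := by group
      calc sl2OpNorm x = sl2OpNorm ((x*y) * y⁻¹) := by rw [← he]
      _ ≤ sl2OpNorm (x*y) * sl2OpNorm y⁻¹ := sl2_norm_mul_le _ _
      _ = sl2OpNorm (x*y) * sl2OpNorm y := by rw [sl2OpNorm_inv]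
    rw [← Real.log_mul (ne_of_gt hxy) (ne_of_gt hy)]
    exact Real.log_le_log hx hx2
  exact abs_le.2 ⟨by linarith, by linarith⟩

lemma log_keyL (x y : SL2R) :
    |Real.log (sl2OpNorm (y*x)) - Real.log (sl2OpNorm x)| ≤ Real.log (sl2OpNorm y) := by
  have hyx := sl2OpNorm_pos (y*x)
  have hx := sl2OpNorm_pos x
  have hy := sl2OpNorm_pos y
  have h1 : Real.log (sl2OpNorm (y*x)) ≤ Real.log (sl2OpNorm x) + Real.log (sl2OpNorm y) := by
    rw [← Real.log_mul (ne_of_gt hx) (ne_of_gt hy), mul_comm (sl2OpNorm x)]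
    exact Real.log_le_log hyx (sl2_norm_mul_le y x)
  have h2 : Real.log (sl2OpNorm x) ≤ Real.log (sl2OpNorm (y*x)) + Real.log (sl2OpNorm y) := by
    have hx2 : sl2OpNorm x ≤ sl2OpNorm (y*x) * sl2OpNorm y := by
      have he : x = y⁻¹ * (y*x) := by group
      calc sl2OpNorm x = sl2OpNorm (y⁻¹ * (y*x)) := by rw [← he]
      _ ≤ sl2OpNorm y⁻¹ * sl2OpNorm (y*x) := sl2_norm_mul_le _ _
      _ = sl2OpNorm (y*x) * sl2OpNorm y := by rw [sl2OpNorm_inv]; ring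
    rw [← Real.log_mul (ne_of_gt hyx) (ne_of_gt hy)]
    exact Real.log_le_log hx hx2
  exact abs_le.2 ⟨by linarith, by linarith⟩
end Aux

section Walk
variable {G : Type*} [Group G]

lemma walk_pos_of (φ : ℤ → ℝ) (NG : ℝ) (n₁ : ℤ) (hn₁ : 0 < n₁)
    (hbig : ∀ n : ℤ, n₁ ≤ |n| → NG < |φ n|) (hstep : ∀ n : ℤ, |φ (n+1) - φ n| ≤ NG)
    (hsymφ : ∀ n : ℤ, φ (-n) = φ n) (hc : 0 < φ n₁) : ∀ n : ℤ, n₁ ≤ |n| → 0 < φ n := by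
  have hnat : ∀ k : ℕ, 0 < φ (n₁ + k) := by
    intro k
    induction k with
    | zero => simpa using hc
    | succ k ih =>
      have habs : n₁ ≤ |n₁ + (k:ℤ) + 1| := by
        rw [abs_of_nonneg (by omega)]
        omega
      have h1 := hbig (n₁ + (k:ℤ) + 1) habs
      have h2 := abs_le.1 (hstep (n₁ + (k:ℤ)))
      have hgoal : 0 < φ (n₁ + (k:ℤ) + 1) := by
        by_contra hcon
        push_neg at hcon
        rw [abs_of_nonpos hcon] at h1
        linarith [h2.1]
      have hcast : (n₁ + ((k:ℤ) + 1)) = (n₁ + (k:ℤ) + 1) := by ring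
      rw [Nat.cast_add, Nat.cast_one, hcast]
      exact hgoal
  intro n hn
  rcases le_or_gt 0 n with h | h
  · rw [abs_of_nonneg h] at hn
    have hk : ((n - n₁).toNat : ℤ) = n - n₁ := Int.toNat_of_nonneg (by omega)
    have : n = n₁ + ((n - n₁).toNat : ℤ) := by omega
    rw [this]
    exact hnat _
  · rw [abs_of_neg h] at hn
    rw [← hsymφ n]
    have hk : ((-n - n₁).toNat : ℤ) = -n - n₁ := Int.toNat_of_nonneg (by omega)
    have : -n = n₁ + ((-n - n₁).toNat : ℤ) := by omega
    rw [this]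
    exact hnat _

lemma walk_onesided (Γ : Subgroup G) (f N : G → ℝ) (g : G) (hg : g ∈ Γ)
    (hkeyR : ∀ γ δ : G, |f (γ * δ) - f γ| ≤ N δ)
    (hkeyL : ∀ γ δ : G, |f (δ * γ) - f γ| ≤ N δ)
    (hNg : 0 ≤ N g)
    (hfinZ : ∀ C : ℝ, 0 ≤ C → {n : ℤ | |f (g ^ n)| ≤ C}.Finite)
    (hfinΓ : ∀ C : ℝ, 0 ≤ C → {γ : G | γ ∈ Γ ∧ |f γ| ≤ C}.Finite)
    (n₁ : ℤ) (hpos : ∀ n : ℤ, n₁ ≤ |n| → 0 < f (g ^ n)) :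
    {γ : G | γ ∈ Γ ∧ f γ ≤ 0}.Finite := by
  set F := {γ : G | γ ∈ Γ ∧ |f γ| ≤ N g} with hFdef
  have hF : F.Finite := hfinΓ (N g) hNg
  -- for each δ, the set of bad elements in the coset δ⟨g⟩ is finite
  have hTfin : ∀ δ : G, {x : G | (∃ n : ℤ, x = δ * g ^ n) ∧ f x ≤ 0}.Finite := by
    intro δ
    set C := max (N δ) 0 with hC
    have hCnn : 0 ≤ C := le_max_right _ _
    have hS : ({n : ℤ | |n| < n₁} ∪ {n : ℤ | |f (g ^ n)| ≤ C}).Finite := by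
      apply Set.Finite.union
      · apply (Set.finite_Icc (-n₁) n₁).subset
        intro n hn
        simp only [Set.mem_setOf_eq] at hn
        have h := abs_lt.1 hn
        exact Set.mem_Icc.2 ⟨by linarith, by linarith⟩
      · exact hfinZ C hCnn
    apply (hS.image (fun n => δ * g ^ n)).subset
    rintro x ⟨⟨n, rfl⟩, hx⟩
    refine ⟨n, ?_, rfl⟩
    have hb := abs_le.1 (hkeyL (g ^ n) δ)
    have hfn : f (g ^ n) ≤ C := by
      have := hb.2
      have := le_max_left (N δ) 0
      linarith
    rcases lt_or_ge (|n|) n₁ with h | h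
    · exact Or.inl h
    · right
      have := hpos n h
      rw [Set.mem_setOf_eq, abs_of_pos this]
      exact hfn
  -- every bad element lies in such a coset with δ in the finite set F
  have hmain : {γ : G | γ ∈ Γ ∧ f γ ≤ 0} ⊆
      ⋃ δ ∈ F, {x : G | (∃ n : ℤ, x = δ * g ^ n) ∧ f x ≤ 0} := by
    rintro γ ⟨hγΓ, hγf⟩
    set A := {k : ℕ | f (γ * g ^ (k:ℤ)) ≤ 0} with hA
    have h0A : 0 ∈ A := by
      simp only [hA, Set.mem_setOf_eq, Nat.cast_zero, zpow_zero, mul_one]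
      exact hγf
    have hAfin : A.Finite := by
      set C := max (N γ) 0 with hC
      have hCnn : (0:ℝ) ≤ C := le_max_right _ _
      have hSfin : ({n : ℤ | |n| < n₁} ∪ {n : ℤ | |f (g ^ n)| ≤ C}).Finite := by
        apply Set.Finite.union
        · apply (Set.finite_Icc (-n₁) n₁).subset
          intro n hn
          simp only [Set.mem_setOf_eq] at hn
          have h := abs_lt.1 hn
          exact Set.mem_Icc.2 ⟨by linarith, by linarith⟩
        · exact hfinZ C hCnn
      have : A ⊆ (fun k : ℕ => (k:ℤ)) ⁻¹'
          ({n : ℤ | |n| < n₁} ∪ {n : ℤ | |f (g ^ n)| ≤ C}) := by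
        intro k hk
        simp only [hA, Set.mem_setOf_eq] at hk
        have hb := abs_le.1 (hkeyL (g ^ (k:ℤ)) γ)
        have hfn : f (g ^ (k:ℤ)) ≤ C := by
          have := hb.2
          have := le_max_left (N γ) 0
          linarith
        simp only [Set.mem_preimage]
        rcases lt_or_ge (|(k:ℤ)|) n₁ with h | h
        · exact Or.inl h
        · right
          have := hpos _ h
          rw [Set.mem_setOf_eq, abs_of_pos this]
          exact hfn
      exact (hSfin.preimage (fun a _ b _ h => by exact_mod_cast h)).subset this
    have hAne : hAfin.toFinset.Nonempty := ⟨0, hAfin.mem_toFinset.2 h0A⟩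
    set n2 := hAfin.toFinset.max' hAne with hn2
    have hn2A : n2 ∈ A := hAfin.mem_toFinset.1 (hAfin.toFinset.max'_mem hAne)
    have hn2max : ∀ m ∈ A, m ≤ n2 := fun m hm =>
      hAfin.toFinset.le_max' m (hAfin.mem_toFinset.2 hm)
    have hn2succ : (n2 + 1) ∉ A := fun hcon => by
      have := hn2max _ hcon
      omega
    set δ := γ * g ^ ((n2:ℤ) + 1) with hδ
    have hfδpos : 0 < f δ := by
      by_contra hcon
      push_neg at hcon
      apply hn2succ
      simp only [hA, Set.mem_setOf_eq]
      have : ((n2 + 1 : ℕ) : ℤ) = (n2:ℤ) + 1 := by push_cast; ring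
      rw [this]
      exact hcon
    have hfδle : f δ ≤ N g := by
      have hx : f (γ * g ^ (n2:ℤ)) ≤ 0 := hn2A
      have hsplit : δ = (γ * g ^ (n2:ℤ)) * g := by
        rw [hδ, mul_assoc, ← _root_.zpow_add_one]
      have hb := abs_le.1 (hkeyR (γ * g ^ (n2:ℤ)) g)
      rw [← hsplit] at hb
      linarith [hb.2]
    have hδΓ : δ ∈ Γ := Γ.mul_mem hγΓ (Γ.zpow_mem hg _)
    have hδF : δ ∈ F := ⟨hδΓ, by rw [abs_of_pos hfδpos]; exact hfδle⟩
    apply Set.mem_biUnion hδF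
    refine ⟨⟨-((n2:ℤ) + 1), ?_⟩, hγf⟩
    rw [hδ]
    group
  exact (hF.biUnion fun δ _ => hTfin δ).subset hmain

lemma walk_main (Γ : Subgroup G) (f N : G → ℝ) (g : G) (hg : g ∈ Γ)
    (hkeyR : ∀ γ δ : G, |f (γ * δ) - f γ| ≤ N δ)
    (hkeyL : ∀ γ δ : G, |f (δ * γ) - f γ| ≤ N δ)
    (hNg : 0 ≤ N g)
    (hfinv : ∀ x : G, f x⁻¹ = f x)
    (hfinΓ : ∀ C : ℝ, 0 ≤ C → {γ : G | γ ∈ Γ ∧ |f γ| ≤ C}.Finite)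
    (hinj : Function.Injective (fun n : ℤ => g ^ n)) :
    {γ : G | γ ∈ Γ ∧ f γ ≤ 0}.Finite ∨ {γ : G | γ ∈ Γ ∧ 0 ≤ f γ}.Finite := by
  have hfinZ : ∀ C : ℝ, 0 ≤ C → {n : ℤ | |f (g ^ n)| ≤ C}.Finite := by
    intro C hC
    have heq : {n : ℤ | |f (g ^ n)| ≤ C}
        = (fun n : ℤ => g ^ n) ⁻¹' {γ : G | γ ∈ Γ ∧ |f γ| ≤ C} := by
      ext n
      simp [Set.mem_preimage, Γ.zpow_mem hg]
    rw [heq]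
    exact (hfinΓ C hC).preimage hinj.injOn
  have hstep : ∀ n : ℤ, |f (g ^ (n+1)) - f (g ^ n)| ≤ N g := by
    intro n
    have := hkeyR (g ^ n) g
    rwa [← _root_.zpow_add_one] at this
  have hsymφ : ∀ n : ℤ, f (g ^ (-n)) = f (g ^ n) := by
    intro n
    rw [_root_.zpow_neg, hfinv]
  obtain ⟨B, hB⟩ := ((hfinZ (N g) hNg).image (fun n : ℤ => |n|)).bddAbove
  set n₁ : ℤ := max B 0 + 1 with hn₁def
  have hn₁pos : 0 < n₁ := by
    have := le_max_right B 0
    omega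
  have hbig : ∀ n : ℤ, n₁ ≤ |n| → N g < |f (g ^ n)| := by
    intro n hn
    by_contra hcon
    push_neg at hcon
    have h1 : |n| ∈ (fun n : ℤ => |n|) '' {n : ℤ | |f (g ^ n)| ≤ N g} := ⟨n, hcon, rfl⟩
    have h2 := hB h1
    have := le_max_left B 0
    omega
  have hn₁abs : n₁ ≤ |n₁| := le_of_eq (abs_of_pos hn₁pos).symm
  rcases lt_or_ge 0 (f (g ^ n₁)) with hc | hc
  · left
    exact walk_onesided Γ f N g hg hkeyR hkeyL hNg hfinZ hfinΓ n₁
      (walk_pos_of (fun n => f (g ^ n)) (N g) n₁ hn₁pos hbig hstep hsymφ hc)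
  · right
    have hcneg : 0 < -(f (g ^ n₁)) := by
      have := hbig n₁ hn₁abs
      rw [abs_of_nonpos hc] at this
      linarith
    have hkeyR' : ∀ γ δ : G, |(fun x => -f x) (γ * δ) - (fun x => -f x) γ| ≤ N δ := by
      intro γ δ
      have := hkeyR γ δ
      have heq : (-f (γ * δ)) - (-f γ) = -(f (γ * δ) - f γ) := by ring
      simp only []
      rw [heq, abs_neg]
      exact this
    have hkeyL' : ∀ γ δ : G, |(fun x => -f x) (δ * γ) - (fun x => -f x) γ| ≤ N δ := by
      intro γ δ
      have := hkeyL γ δ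
      have heq : (-f (δ * γ)) - (-f γ) = -(f (δ * γ) - f γ) := by ring
      simp only []
      rw [heq, abs_neg]
      exact this
    have hfinZ' : ∀ C : ℝ, 0 ≤ C → {n : ℤ | |(fun x => -f x) (g ^ n)| ≤ C}.Finite := by
      intro C hC
      have heq : {n : ℤ | |(-f (g ^ n))| ≤ C} = {n : ℤ | |f (g ^ n)| ≤ C} := by
        ext n; simp [abs_neg]
      exact heq ▸ hfinZ C hC
    have hfinΓ' : ∀ C : ℝ, 0 ≤ C → {γ : G | γ ∈ Γ ∧ |(fun x => -f x) γ| ≤ C}.Finite := by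
      intro C hC
      have heq : {γ : G | γ ∈ Γ ∧ |(-f γ)| ≤ C} = {γ : G | γ ∈ Γ ∧ |f γ| ≤ C} := by
        ext γ; simp [abs_neg]
      exact heq ▸ hfinΓ C hC
    have hbig' : ∀ n : ℤ, n₁ ≤ |n| → N g < |(fun n : ℤ => -f (g ^ n)) n| := by
      intro n hn
      simp only [abs_neg]
      exact hbig n hn
    have hstep' : ∀ n : ℤ, |(fun n : ℤ => -f (g ^ n)) (n+1) - (fun n : ℤ => -f (g ^ n)) n| ≤ N g := by
      intro n
      simp only []
      have heq : (-f (g ^ (n+1))) - (-f (g ^ n)) = -(f (g ^ (n+1)) - f (g ^ n)) := by ring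
      rw [heq, abs_neg]
      exact hstep n
    have hsymφ' : ∀ n : ℤ, (fun n : ℤ => -f (g ^ n)) (-n) = (fun n : ℤ => -f (g ^ n)) n := by
      intro n
      simp only [hsymφ n]
    have hpos' := walk_pos_of (fun n : ℤ => -f (g ^ n)) (N g) n₁ hn₁pos hbig' hstep' hsymφ' hcneg
    have hres := walk_onesided Γ (fun x => -f x) N g hg hkeyR' hkeyL' hNg hfinZ' hfinΓ' n₁ hpos'
    have heq : {γ : G | γ ∈ Γ ∧ (fun x => -f x) γ ≤ 0} = {γ : G | γ ∈ Γ ∧ 0 ≤ f γ} := by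
      ext γ
      simp only [Set.mem_setOf_eq, neg_nonpos]
    exact heq ▸ hres

end Walk

theorem stmt_4 (Γ : Subgroup (SL2R × SL2R))
    (hdiscrete : DiscreteTopology Γ)
    (hinforder : ∃ g ∈ Γ, ¬ IsOfFinOrder g)
    -- Γ acts properly discontinuously on SL₂(ℝ) by (γ₁,γ₂)·g = γ₁gγ₂⁻¹ :
    (hproper : ∀ K L : Set SL2R, IsCompact K → IsCompact L →
      {γ : Γ | ((fun g => (γ : SL2R × SL2R).1 * g * ((γ : SL2R × SL2R).2)⁻¹) '' K ∩ L).Nonempty}.Finite) :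
    {γ : SL2R × SL2R | γ ∈ Γ ∧ ¬ sl2OpNorm γ.2 < sl2OpNorm γ.1}.Finite ∨
    {γ : SL2R × SL2R | γ ∈ Γ ∧ ¬ sl2OpNorm γ.1 < sl2OpNorm γ.2}.Finite := by
  classical
  set f : SL2R × SL2R → ℝ :=
    fun γ => Real.log (sl2OpNorm γ.1) - Real.log (sl2OpNorm γ.2) with hf
  set N : SL2R × SL2R → ℝ :=
    fun γ => Real.log (sl2OpNorm γ.1) + Real.log (sl2OpNorm γ.2) with hN
  have hkeyR : ∀ γ δ : SL2R × SL2R, |f (γ * δ) - f γ| ≤ N δ := by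
    intro γ δ
    have h1 := abs_le.1 (Aux.log_keyR γ.1 δ.1)
    have h2 := abs_le.1 (Aux.log_keyR γ.2 δ.2)
    have heq : f (γ * δ) - f γ
        = (Real.log (sl2OpNorm (γ.1 * δ.1)) - Real.log (sl2OpNorm γ.1))
          - (Real.log (sl2OpNorm (γ.2 * δ.2)) - Real.log (sl2OpNorm γ.2)) := by
      simp only [hf, Prod.fst_mul, Prod.snd_mul]
      ring
    have hNδ : N δ = Real.log (sl2OpNorm δ.1) + Real.log (sl2OpNorm δ.2) := rfl
    rw [heq, hNδ]
    exact abs_le.2 ⟨by linarith [h1.1, h2.2], by linarith [h1.2, h2.1]⟩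
  have hkeyL : ∀ γ δ : SL2R × SL2R, |f (δ * γ) - f γ| ≤ N δ := by
    intro γ δ
    have h1 := abs_le.1 (Aux.log_keyL γ.1 δ.1)
    have h2 := abs_le.1 (Aux.log_keyL γ.2 δ.2)
    have heq : f (δ * γ) - f γ
        = (Real.log (sl2OpNorm (δ.1 * γ.1)) - Real.log (sl2OpNorm γ.1))
          - (Real.log (sl2OpNorm (δ.2 * γ.2)) - Real.log (sl2OpNorm γ.2)) := by
      simp only [hf, Prod.fst_mul, Prod.snd_mul]
      ring
    have hNδ : N δ = Real.log (sl2OpNorm δ.1) + Real.log (sl2OpNorm δ.2) := rfl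
    rw [heq, hNδ]
    exact abs_le.2 ⟨by linarith [h1.1, h2.2], by linarith [h1.2, h2.1]⟩
  have hfinv : ∀ x : SL2R × SL2R, f x⁻¹ = f x := by
    intro x
    simp only [hf, Prod.fst_inv, Prod.snd_inv, Aux.sl2OpNorm_inv]
  have hfinΓ : ∀ C : ℝ, 0 ≤ C → {γ : SL2R × SL2R | γ ∈ Γ ∧ |f γ| ≤ C}.Finite := by
    intro C hC
    apply (Aux.factA Γ hproper (Real.exp C) (Real.one_le_exp hC)).subset
    rintro γ ⟨h1, h2⟩
    have hb := abs_le.1 h2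
    have hp1 := Aux.sl2OpNorm_pos γ.1
    have hp2 := Aux.sl2OpNorm_pos γ.2
    refine ⟨h1, ?_, ?_⟩
    · calc sl2OpNorm γ.1 = Real.exp (Real.log (sl2OpNorm γ.1)) := (Real.exp_log hp1).symm
      _ ≤ Real.exp (C + Real.log (sl2OpNorm γ.2)) := by
          apply Real.exp_le_exp.2
          have := hb.2
          simp only [hf] at this
          linarith
      _ = Real.exp C * sl2OpNorm γ.2 := by rw [Real.exp_add, Real.exp_log hp2]
    · calc sl2OpNorm γ.2 = Real.exp (Real.log (sl2OpNorm γ.2)) := (Real.exp_log hp2).symm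
      _ ≤ Real.exp (C + Real.log (sl2OpNorm γ.1)) := by
          apply Real.exp_le_exp.2
          have := hb.1
          simp only [hf] at this
          linarith
      _ = Real.exp C * sl2OpNorm γ.1 := by rw [Real.exp_add, Real.exp_log hp1]
  obtain ⟨g, hgΓ, hord⟩ := hinforder
  have hinj : Function.Injective (fun n : ℤ => g ^ n) :=
    injective_zpow_iff_not_isOfFinOrder.2 hord
  have hNg : 0 ≤ N g := by
    simp only [hN]
    have := Aux.log_nonneg' g.1
    have := Aux.log_nonneg' g.2
    linarith
  rcases walk_main Γ f N g hgΓ hkeyR hkeyL hNg hfinv hfinΓ hinj with h | h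
  · left
    have heq : {γ : SL2R × SL2R | γ ∈ Γ ∧ ¬ sl2OpNorm γ.2 < sl2OpNorm γ.1}
        = {γ : SL2R × SL2R | γ ∈ Γ ∧ f γ ≤ 0} := by
      ext γ
      simp only [Set.mem_setOf_eq, not_lt, hf, sub_nonpos]
      constructor
      · rintro ⟨hm, hle⟩
        exact ⟨hm, Real.log_le_log (Aux.sl2OpNorm_pos γ.1) hle⟩
      · rintro ⟨hm, hle⟩
        exact ⟨hm, (Real.log_le_log_iff (Aux.sl2OpNorm_pos γ.1) (Aux.sl2OpNorm_pos γ.2)).1 hle⟩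
    rw [heq]
    exact h
  · right
    have heq : {γ : SL2R × SL2R | γ ∈ Γ ∧ ¬ sl2OpNorm γ.1 < sl2OpNorm γ.2}
        = {γ : SL2R × SL2R | γ ∈ Γ ∧ 0 ≤ f γ} := by
      ext γ
      simp only [Set.mem_setOf_eq, not_lt, hf, sub_nonneg]
      constructor
      · rintro ⟨hm, hle⟩
        exact ⟨hm, Real.log_le_log (Aux.sl2OpNorm_pos γ.2) hle⟩
      · rintro ⟨hm, hle⟩
        exact ⟨hm, (Real.log_le_log_iff (Aux.sl2OpNorm_pos γ.2) (Aux.sl2OpNorm_pos γ.1)).1 hle⟩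
    rw [heq]
    exact h
end

section
/- For all g, g' ∈ SL_n(ℝ), the following two inequalities hold for the Euclidean norm on ℝⁿ: ‖μ(gg') − μ(g)‖ ≤ ‖μ(g')‖ and ‖μ(gg') − μ(g')‖ ≤ ‖μ(g)‖, where μ(g) = (log σ₁(g), …, log σ_n(g)) ∈ ℝⁿ. -/
/-!
STATEMENT 11: for g, g' ∈ SL_n(ℝ), ‖μ(gg') − μ(g)‖ ≤ ‖μ(g')‖ and
‖μ(gg') − μ(g')‖ ≤ ‖μ(g)‖ for the Euclidean norm on ℝⁿ, where
μ(g) = (log σ₁(g), …, log σ_n(g)) is the vector of logarithms of the singular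
values of g in decreasing order.
-/

open Matrix

/-- The Cartan projection μ(g) = (log σ₁(g), …, log σ_n(g)) ∈ ℝⁿ (0-indexed:
`cartanProj g i = log σ_{i+1}(g)`), where σ₁(g) ≥ … ≥ σ_n(g) are the singular
values of g, i.e. the square roots of the eigenvalues of gᵀg (= gᴴg over ℝ)
listed in decreasing order with multiplicity.  It is valued in `EuclideanSpace ℝ
(Fin n)`, i.e. ℝⁿ with the Euclidean norm. -/
noncomputable def cartanProj {n : ℕ} (g : Matrix (Fin n) (Fin n) ℝ) :
    EuclideanSpace ℝ (Fin n) :=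
  WithLp.toLp 2 fun i =>
    Real.log (Real.sqrt
      (((show (gᵀ * g).IsHermitian by
            simpa [Matrix.conjTranspose_eq_transpose_of_trivial] using
              Matrix.isHermitian_conjTranspose_mul_self g).eigenvalues ∘
        (Tuple.sort (show (gᵀ * g).IsHermitian by
            simpa [Matrix.conjTranspose_eq_transpose_of_trivial] using
              Matrix.isHermitian_conjTranspose_mul_self g).eigenvalues)) i.rev))

namespace CartanAux

open Finset

variable {n : ℕ}

local notation "E" => EuclideanSpace ℝ (Fin n)

lemma inner_eq_dot (x y : E) : (inner ℝ x y : ℝ) = (x : Fin n → ℝ) ⬝ᵥ (y : Fin n → ℝ) := by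
  simp [PiLp.inner_apply, dotProduct, RCLike.inner_apply, mul_comm]

def MSpec (M : Matrix (Fin n) (Fin n) ℝ) (w : Fin n → ℝ)
    (f : OrthonormalBasis (Fin n) ℝ (EuclideanSpace ℝ (Fin n))) : Prop :=
  ∀ i, M *ᵥ ⇑(f i) = w i • ⇑(f i)

lemma dot_orthonormal (f : OrthonormalBasis (Fin n) ℝ E) (i j : Fin n) :
    (⇑(f i) : Fin n → ℝ) ⬝ᵥ ⇑(f j) = if i = j then 1 else 0 := by
  rw [← inner_eq_dot]
  exact orthonormal_iff_ite.mp f.orthonormal i j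

lemma repr_sum (f : OrthonormalBasis (Fin n) ℝ E) (v : Fin n → ℝ) :
    ∑ i, ((⇑(f i) : Fin n → ℝ) ⬝ᵥ v) • (⇑(f i) : Fin n → ℝ) = v := by
  have h := f.sum_repr' ((WithLp.equiv 2 (Fin n → ℝ)).symm v)
  have h2 : ∀ i : Fin n, (inner ℝ (f i) ((WithLp.equiv 2 (Fin n → ℝ)).symm v) : ℝ)
      = (⇑(f i) : Fin n → ℝ) ⬝ᵥ v := by
    intro i; rw [inner_eq_dot]; rfl
  calc ∑ i, ((⇑(f i) : Fin n → ℝ) ⬝ᵥ v) • (⇑(f i) : Fin n → ℝ)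
      = ∑ i, ((inner ℝ (f i) ((WithLp.equiv 2 (Fin n → ℝ)).symm v) : ℝ)) • (⇑(f i) : Fin n → ℝ) := by
        refine Finset.sum_congr rfl fun i _ => ?_; rw [h2]
    _ = v := by
        have := congrArg (WithLp.equiv 2 (Fin n → ℝ)) h
        simpa using this

lemma dot_expand (f : OrthonormalBasis (Fin n) ℝ E) (u v : Fin n → ℝ) :
    u ⬝ᵥ v = ∑ i, ((⇑(f i) : Fin n → ℝ) ⬝ᵥ u) * ((⇑(f i) : Fin n → ℝ) ⬝ᵥ v) := by
  have h := f.sum_inner_mul_inner ((WithLp.equiv 2 (Fin n → ℝ)).symm u)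
    ((WithLp.equiv 2 (Fin n → ℝ)).symm v)
  have hu : ∀ i : Fin n, (inner ℝ ((WithLp.equiv 2 (Fin n → ℝ)).symm u) (f i) : ℝ)
      = (⇑(f i) : Fin n → ℝ) ⬝ᵥ u := by
    intro i; rw [real_inner_comm, inner_eq_dot]; rfl
  have hv : ∀ i : Fin n, (inner ℝ (f i) ((WithLp.equiv 2 (Fin n → ℝ)).symm v) : ℝ)
      = (⇑(f i) : Fin n → ℝ) ⬝ᵥ v := by
    intro i; rw [inner_eq_dot]; rfl
  have huv : (inner ℝ ((WithLp.equiv 2 (Fin n → ℝ)).symm u)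
      ((WithLp.equiv 2 (Fin n → ℝ)).symm v) : ℝ) = u ⬝ᵥ v := by
    rw [inner_eq_dot]; rfl
  rw [← huv, ← h]
  exact Finset.sum_congr rfl fun i _ => by rw [hu, hv]

lemma mulVec_sum (M : Matrix (Fin n) (Fin n) ℝ) (g : Fin n → (Fin n → ℝ)) :
    M *ᵥ (∑ j, g j) = ∑ j, M *ᵥ (g j) := by
  have : ∀ w, M *ᵥ w = M.mulVecLin w := fun _ => rfl
  rw [this]; rw [map_sum]; exact Finset.sum_congr rfl fun j _ => (this (g j)).symm

lemma dot_sum_right (u : Fin n → ℝ) (g : Fin n → (Fin n → ℝ)) :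
    u ⬝ᵥ (∑ j, g j) = ∑ j, u ⬝ᵥ (g j) := by
  simp only [dotProduct, Finset.sum_apply, Finset.mul_sum]
  exact Finset.sum_comm

lemma dot_mulVec_basis {M : Matrix (Fin n) (Fin n) ℝ} {w : Fin n → ℝ}
    {f : OrthonormalBasis (Fin n) ℝ E} (hM : MSpec M w f) (v : Fin n → ℝ) (i : Fin n) :
    (⇑(f i) : Fin n → ℝ) ⬝ᵥ (M *ᵥ v) = w i * ((⇑(f i) : Fin n → ℝ) ⬝ᵥ v) := by
  have hv : M *ᵥ v = ∑ j, (((⇑(f j) : Fin n → ℝ) ⬝ᵥ v) * w j) • (⇑(f j) : Fin n → ℝ) := by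
    calc M *ᵥ v = M *ᵥ (∑ j, ((⇑(f j) : Fin n → ℝ) ⬝ᵥ v) • (⇑(f j) : Fin n → ℝ)) := by
          rw [repr_sum]
      _ = ∑ j, M *ᵥ (((⇑(f j) : Fin n → ℝ) ⬝ᵥ v) • (⇑(f j) : Fin n → ℝ)) := mulVec_sum _ _
      _ = ∑ j, (((⇑(f j) : Fin n → ℝ) ⬝ᵥ v) * w j) • (⇑(f j) : Fin n → ℝ) := by
          refine Finset.sum_congr rfl fun j _ => ?_
          rw [mulVec_smul, hM j, smul_smul]
  rw [hv, dot_sum_right, Finset.sum_eq_single i]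
  · rw [dotProduct_smul, dot_orthonormal, if_pos rfl]
    simp only [smul_eq_mul, mul_one]
    ring
  · intro j _ hj
    rw [dotProduct_smul, dot_orthonormal, if_neg (Ne.symm hj)]
    simp
  · intro h; exact absurd (mem_univ i) h

lemma quad_eq {M : Matrix (Fin n) (Fin n) ℝ} {w : Fin n → ℝ}
    {f : OrthonormalBasis (Fin n) ℝ E} (hM : MSpec M w f) (v : Fin n → ℝ) :
    v ⬝ᵥ (M *ᵥ v) = ∑ i, w i * ((⇑(f i) : Fin n → ℝ) ⬝ᵥ v) ^ 2 := by
  rw [dot_expand f v (M *ᵥ v)]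
  refine Finset.sum_congr rfl fun i _ => ?_
  rw [dot_mulVec_basis hM]; ring

lemma normsq_eq (f : OrthonormalBasis (Fin n) ℝ E) (v : Fin n → ℝ) :
    v ⬝ᵥ v = ∑ i, ((⇑(f i) : Fin n → ℝ) ⬝ᵥ v) ^ 2 := by
  rw [dot_expand f v v]; exact Finset.sum_congr rfl fun i _ => (sq _).symm

lemma quad_le_bound {M : Matrix (Fin n) (Fin n) ℝ} {w : Fin n → ℝ}
    {f : OrthonormalBasis (Fin n) ℝ E} (hM : MSpec M w f) {b : ℝ}
    (hb : ∀ j, w j ≤ b) (v : Fin n → ℝ) :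
    v ⬝ᵥ (M *ᵥ v) ≤ b * (v ⬝ᵥ v) := by
  rw [quad_eq hM, normsq_eq f, Finset.mul_sum]
  exact Finset.sum_le_sum fun i _ => mul_le_mul_of_nonneg_right (hb i) (sq_nonneg _)

lemma quad_ge_bound {M : Matrix (Fin n) (Fin n) ℝ} {w : Fin n → ℝ}
    {f : OrthonormalBasis (Fin n) ℝ E} (hM : MSpec M w f) {b : ℝ}
    (hb : ∀ j, b ≤ w j) (v : Fin n → ℝ) :
    b * (v ⬝ᵥ v) ≤ v ⬝ᵥ (M *ᵥ v) := by
  rw [quad_eq hM, normsq_eq f, Finset.mul_sum]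
  exact Finset.sum_le_sum fun i _ => mul_le_mul_of_nonneg_right (hb i) (sq_nonneg _)

/-- span of a subfamily of an orthonormal basis -/
noncomputable def fspan (f : OrthonormalBasis (Fin n) ℝ E) (S : Finset (Fin n)) :
    Submodule ℝ (EuclideanSpace ℝ (Fin n)) :=
  Submodule.span ℝ ((fun i => (f i : EuclideanSpace ℝ (Fin n))) '' ↑S)

lemma dot_eq_zero_of_mem_fspan (f : OrthonormalBasis (Fin n) ℝ E) (S : Finset (Fin n))
    {v : EuclideanSpace ℝ (Fin n)} (hv : v ∈ fspan f S) {i : Fin n} (hi : i ∉ S) :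
    (⇑(f i) : Fin n → ℝ) ⬝ᵥ (v : Fin n → ℝ) = 0 := by
  induction hv using Submodule.span_induction with
  | mem x hx =>
      obtain ⟨j, hj, rfl⟩ := hx
      have h := dot_orthonormal f i j
      rw [if_neg (by rintro rfl; exact hi hj)] at h
      exact h
  | zero => simp
  | add x y _ _ hx hy =>
      have : ((x + y : E) : Fin n → ℝ) = (x : Fin n → ℝ) + (y : Fin n → ℝ) := rfl
      rw [this, dotProduct_add, hx, hy, add_zero]
  | smul c x _ hx =>
      have : ((c • x : E) : Fin n → ℝ) = c • (x : Fin n → ℝ) := rfl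
      rw [this, dotProduct_smul, hx, smul_zero]

lemma finrank_fspan (f : OrthonormalBasis (Fin n) ℝ E) (S : Finset (Fin n)) :
    Module.finrank ℝ (fspan f S) = S.card := by
  rw [fspan, Set.image_eq_range]
  rw [finrank_span_eq_card]
  · exact Fintype.card_coe S
  · exact (f.orthonormal.linearIndependent.comp Subtype.val Subtype.val_injective)

lemma exists_ne_zero_mem_inf {V W : Submodule ℝ (EuclideanSpace ℝ (Fin n))}
    (h : n < Module.finrank ℝ V + Module.finrank ℝ W) :
    ∃ v : EuclideanSpace ℝ (Fin n), v ∈ V ∧ v ∈ W ∧ v ≠ 0 := by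
  have hnd : ¬ Disjoint V W := by
    intro hd
    have := Submodule.finrank_add_finrank_le_of_disjoint hd
    rw [finrank_euclideanSpace_fin] at this
    omega
  rw [disjoint_iff] at hnd
  obtain ⟨v, hv, hv0⟩ := Submodule.exists_mem_ne_zero_of_ne_bot hnd
  exact ⟨v, (Submodule.mem_inf.mp hv).1, (Submodule.mem_inf.mp hv).2, hv0⟩

lemma dot_self_nonneg (v : Fin n → ℝ) : 0 ≤ v ⬝ᵥ v :=
  Finset.sum_nonneg fun i _ => mul_self_nonneg (v i)

lemma dot_self_pos {v : Fin n → ℝ} (hv : v ≠ 0) : 0 < v ⬝ᵥ v := by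
  rcases lt_or_eq_of_le (dot_self_nonneg v) with h | h
  · exact h
  · exact absurd (dotProduct_self_eq_zero.mp h.symm) hv

/-- Courant-Fischer comparison: if the quadratic form of `N` is dominated by `c` times that
of `M`, then the sorted eigenvalues compare. -/
lemma spec_mono {N M : Matrix (Fin n) (Fin n) ℝ} {ν w : Fin n → ℝ}
    {fN fM : OrthonormalBasis (Fin n) ℝ E}
    (hN : MSpec N ν fN) (hν : Antitone ν) (hM : MSpec M w fM) (hw : Antitone w)
    {c : ℝ} (hc : 0 ≤ c) (h : ∀ v : Fin n → ℝ, v ⬝ᵥ (N *ᵥ v) ≤ c * (v ⬝ᵥ (M *ᵥ v))) (k : Fin n) :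
    ν k ≤ c * w k := by
  obtain ⟨v, hvV, hvW, hv0⟩ := exists_ne_zero_mem_inf (V := fspan fN (Finset.Iic k))
    (W := fspan fM (Finset.Ici k)) (by
      rw [finrank_fspan, finrank_fspan, Fin.card_Iic, Fin.card_Ici]
      have := k.isLt; omega)
  have hvne : (v : Fin n → ℝ) ≠ 0 := by
    intro hz; apply hv0
    apply (WithLp.equiv 2 (Fin n → ℝ)).injective
    exact hz
  have hpos := dot_self_pos hvne
  -- lower bound for N
  have h1 : ν k * ((v : Fin n → ℝ) ⬝ᵥ v) ≤ (v : Fin n → ℝ) ⬝ᵥ (N *ᵥ v) := by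
    rw [quad_eq hN, normsq_eq fN, Finset.mul_sum]
    refine Finset.sum_le_sum fun i _ => ?_
    by_cases hiS : i ∈ Finset.Iic k
    · exact mul_le_mul_of_nonneg_right (hν (Finset.mem_Iic.mp hiS)) (sq_nonneg _)
    · rw [dot_eq_zero_of_mem_fspan fN _ hvV hiS]
      simp
  -- upper bound for M
  have h2 : (v : Fin n → ℝ) ⬝ᵥ (M *ᵥ v) ≤ w k * ((v : Fin n → ℝ) ⬝ᵥ v) := by
    rw [quad_eq hM, normsq_eq fM, Finset.mul_sum]
    refine Finset.sum_le_sum fun i _ => ?_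
    by_cases hiS : i ∈ Finset.Ici k
    · exact mul_le_mul_of_nonneg_right (hw (Finset.mem_Ici.mp hiS)) (sq_nonneg _)
    · rw [dot_eq_zero_of_mem_fspan fM _ hvW hiS]
      simp
  have h3 : ν k * ((v : Fin n → ℝ) ⬝ᵥ v) ≤ (c * w k) * ((v : Fin n → ℝ) ⬝ᵥ v) := by
    calc ν k * ((v : Fin n → ℝ) ⬝ᵥ v) ≤ (v : Fin n → ℝ) ⬝ᵥ (N *ᵥ v) := h1
      _ ≤ c * ((v : Fin n → ℝ) ⬝ᵥ (M *ᵥ v)) := h v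
      _ ≤ (c * w k) * ((v : Fin n → ℝ) ⬝ᵥ v) := by
          rw [mul_assoc]
          exact mul_le_mul_of_nonneg_left h2 hc
  exact le_of_mul_le_mul_right h3 hpos

lemma spec_unique {M : Matrix (Fin n) (Fin n) ℝ} {w w' : Fin n → ℝ}
    {f f' : OrthonormalBasis (Fin n) ℝ E}
    (hM : MSpec M w f) (hw : Antitone w) (hM' : MSpec M w' f') (hw' : Antitone w') :
    w = w' := by
  funext k
  have h1 := spec_mono hM hw hM' hw' (c := 1) zero_le_one (fun v => by rw [one_mul]) k
  have h2 := spec_mono hM' hw' hM hw (c := 1) zero_le_one (fun v => by rw [one_mul]) k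
  rw [one_mul] at h1 h2
  exact le_antisymm h1 h2

/-- matrix whose columns are the orthonormal basis vectors -/
noncomputable def bmat (f : OrthonormalBasis (Fin n) ℝ E) : Matrix (Fin n) (Fin n) ℝ :=
  Matrix.of fun i j => (⇑(f j) : Fin n → ℝ) i

lemma bmat_transpose_mul (f : OrthonormalBasis (Fin n) ℝ E) :
    (bmat f)ᵀ * bmat f = 1 := by
  ext i j
  rw [Matrix.mul_apply]
  have := dot_orthonormal f i j
  simp only [dotProduct] at this
  simp only [Matrix.transpose_apply, bmat, Matrix.of_apply]
  rw [this]
  simp [Matrix.one_apply]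

lemma det_bmat_mul_det_bmat (f : OrthonormalBasis (Fin n) ℝ E) :
    det (bmat f) * det (bmat f) = 1 := by
  have h := congrArg det (bmat_transpose_mul f)
  rwa [det_mul, det_transpose, det_one] at h

lemma det_bmat_ne_zero (f : OrthonormalBasis (Fin n) ℝ E) : det (bmat f) ≠ 0 := by
  intro h
  have := det_bmat_mul_det_bmat f
  rw [h, mul_zero] at this
  exact zero_ne_one this

lemma mul_bmat_eq {M : Matrix (Fin n) (Fin n) ℝ} {w : Fin n → ℝ}
    {f : OrthonormalBasis (Fin n) ℝ E} (hM : MSpec M w f) :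
    M * bmat f = bmat f * diagonal w := by
  ext i j
  rw [Matrix.mul_apply, Matrix.mul_diagonal]
  have h := congrFun (hM j) i
  simp only [Matrix.mulVec, dotProduct, Pi.smul_apply, smul_eq_mul] at h
  simp only [bmat, Matrix.of_apply]
  rw [show ∑ k, M i k * (⇑(f j) : Fin n → ℝ) k = w j * (⇑(f j) : Fin n → ℝ) i from h]
  ring

lemma spec_det {M : Matrix (Fin n) (Fin n) ℝ} {w : Fin n → ℝ}
    {f : OrthonormalBasis (Fin n) ℝ E} (hM : MSpec M w f) :
    det M = ∏ i, w i := by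
  have h := congrArg det (mul_bmat_eq hM)
  rw [det_mul, det_mul, det_diagonal] at h
  have hP := det_bmat_ne_zero f
  have h' : det (bmat f) * det M = det (bmat f) * ∏ i, w i := by
    rw [mul_comm (det (bmat f)) (det M), h]
  exact mul_left_cancel₀ hP h' 

/-- the symmetric matrix with eigenbasis `f` and eigenvalues `w` -/
noncomputable def specMatrix (f : OrthonormalBasis (Fin n) ℝ E) (w : Fin n → ℝ) :
    Matrix (Fin n) (Fin n) ℝ :=
  bmat f * diagonal w * (bmat f)ᵀ

lemma specMatrix_transpose (f : OrthonormalBasis (Fin n) ℝ E) (w : Fin n → ℝ) :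
    (specMatrix f w)ᵀ = specMatrix f w := by
  simp [specMatrix, Matrix.transpose_mul, Matrix.diagonal_transpose, Matrix.mul_assoc]

lemma transpose_bmat_mulVec (f : OrthonormalBasis (Fin n) ℝ E) (m : Fin n) :
    (bmat f)ᵀ *ᵥ ⇑(f m) = Pi.single m 1 := by
  funext i
  simp only [Matrix.mulVec, dotProduct, Matrix.transpose_apply, bmat, Matrix.of_apply]
  have := dot_orthonormal f i m
  simp only [dotProduct] at this
  rw [this]
  simp [Pi.single_apply, eq_comm]

lemma bmat_mulVec_single (f : OrthonormalBasis (Fin n) ℝ E) (m : Fin n) (c : ℝ) :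
    bmat f *ᵥ Pi.single m c = c • (⇑(f m) : Fin n → ℝ) := by
  funext i
  rw [Matrix.mulVec_single]
  simp [bmat, mul_comm]

lemma mspec_specMatrix (f : OrthonormalBasis (Fin n) ℝ E) (w : Fin n → ℝ) :
    MSpec (specMatrix f w) w f := by
  intro m
  rw [specMatrix, ← Matrix.mulVec_mulVec, ← Matrix.mulVec_mulVec, transpose_bmat_mulVec,
    Matrix.diagonal_mulVec_single, mul_one]
  rw [bmat_mulVec_single]

lemma specMatrix_det (f : OrthonormalBasis (Fin n) ℝ E) (w : Fin n → ℝ) :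
    det (specMatrix f w) = ∏ i, w i := by
  rw [specMatrix, det_mul, det_mul, det_diagonal, det_transpose]
  rw [mul_right_comm, det_bmat_mul_det_bmat, one_mul]

lemma hermT (g : Matrix (Fin n) (Fin n) ℝ) : (gᵀ * g).IsHermitian := by
  simpa [Matrix.conjTranspose_eq_transpose_of_trivial] using
    Matrix.isHermitian_conjTranspose_mul_self g

/-- squared singular values, in decreasing order -/
noncomputable def sq (g : Matrix (Fin n) (Fin n) ℝ) : Fin n → ℝ := fun i =>
  (((hermT g).eigenvalues ∘
    (Tuple.sort (hermT g).eigenvalues)) i.rev)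

noncomputable def sqBasis (g : Matrix (Fin n) (Fin n) ℝ) :
    OrthonormalBasis (Fin n) ℝ (EuclideanSpace ℝ (Fin n)) :=
  (hermT g).eigenvectorBasis.reindex
    (Fin.revPerm.trans (Tuple.sort (hermT g).eigenvalues)).symm

lemma mspec_sq (g : Matrix (Fin n) (Fin n) ℝ) : MSpec (gᵀ * g) (sq g) (sqBasis g) := by
  intro i
  rw [sqBasis, OrthonormalBasis.reindex_apply]
  simp only [Equiv.symm_symm]
  exact (hermT g).mulVec_eigenvectorBasis _

lemma antitone_sq (g : Matrix (Fin n) (Fin n) ℝ) : Antitone (sq g) := by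
  intro i j hij
  exact Tuple.monotone_sort _ (Fin.rev_le_rev.mpr hij)

lemma gram_dot (g : Matrix (Fin n) (Fin n) ℝ) (u v : Fin n → ℝ) :
    (g *ᵥ u) ⬝ᵥ (g *ᵥ v) = u ⬝ᵥ ((gᵀ * g) *ᵥ v) := by
  have h : u ⬝ᵥ ((gᵀ * g) *ᵥ v) = (u ᵥ* gᵀ) ⬝ᵥ (g *ᵥ v) := by
    rw [← Matrix.mulVec_mulVec, Matrix.dotProduct_mulVec]
  rw [h, Matrix.vecMul_transpose]

lemma sq_eq_dot (g : Matrix (Fin n) (Fin n) ℝ) (i : Fin n) :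
    sq g i = (g *ᵥ ⇑(sqBasis g i)) ⬝ᵥ (g *ᵥ ⇑(sqBasis g i)) := by
  rw [gram_dot, mspec_sq g i, dotProduct_smul, dot_orthonormal]
  simp

lemma sq_nonneg' (g : Matrix (Fin n) (Fin n) ℝ) (i : Fin n) : 0 ≤ sq g i := by
  rw [sq_eq_dot]
  exact Finset.sum_nonneg fun k _ => mul_self_nonneg _

lemma mulVec_ne_zero {g : Matrix (Fin n) (Fin n) ℝ} (hg : IsUnit g.det)
    {v : Fin n → ℝ} (hv : v ≠ 0) : g *ᵥ v ≠ 0 := by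
  intro h
  apply hv
  have : g⁻¹ *ᵥ (g *ᵥ v) = v := by
    rw [Matrix.mulVec_mulVec, Matrix.nonsing_inv_mul g hg, Matrix.one_mulVec]
  rw [h, Matrix.mulVec_zero] at this
  exact this.symm

lemma basis_ne_zero (f : OrthonormalBasis (Fin n) ℝ E) (i : Fin n) :
    (⇑(f i) : Fin n → ℝ) ≠ 0 := by
  intro h
  have h0 : (f i : EuclideanSpace ℝ (Fin n)) = 0 := by
    apply (WithLp.equiv 2 (Fin n → ℝ)).injective
    exact h
  exact f.orthonormal.ne_zero i h0

lemma sq_pos {g : Matrix (Fin n) (Fin n) ℝ} (hg : IsUnit g.det) (i : Fin n) :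
    0 < sq g i := by
  rw [sq_eq_dot]
  exact dot_self_pos (mulVec_ne_zero hg (basis_ne_zero _ i))

/-- the left singular basis: an orthonormal eigenbasis of `g * gᵀ` with the same eigenvalues -/
lemma mspec_mul_transpose {g : Matrix (Fin n) (Fin n) ℝ} (hg : IsUnit g.det) :
    ∃ u : OrthonormalBasis (Fin n) ℝ (EuclideanSpace ℝ (Fin n)), MSpec (g * gᵀ) (sq g) u := by
  set f := sqBasis g
  set a := sq g with ha
  have hapos : ∀ i, 0 < a i := fun i => sq_pos hg i
  set uvec : Fin n → EuclideanSpace ℝ (Fin n) := fun i =>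
    (WithLp.equiv 2 (Fin n → ℝ)).symm ((Real.sqrt (a i))⁻¹ • (g *ᵥ ⇑(f i))) with huvec
  have hdot : ∀ i j, (⇑(uvec i) : Fin n → ℝ) ⬝ᵥ (⇑(uvec j) : Fin n → ℝ)
      = if i = j then 1 else 0 := by
    intro i j
    have : (⇑(uvec i) : Fin n → ℝ) ⬝ᵥ (⇑(uvec j) : Fin n → ℝ)
        = (Real.sqrt (a i))⁻¹ * ((Real.sqrt (a j))⁻¹ * ((g *ᵥ ⇑(f i)) ⬝ᵥ (g *ᵥ ⇑(f j)))) := by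
      rw [show (⇑(uvec i) : Fin n → ℝ) = (Real.sqrt (a i))⁻¹ • (g *ᵥ ⇑(f i)) from rfl,
        show (⇑(uvec j) : Fin n → ℝ) = (Real.sqrt (a j))⁻¹ • (g *ᵥ ⇑(f j)) from rfl,
        smul_dotProduct, dotProduct_smul]
      simp [smul_eq_mul]
    rw [this, gram_dot, mspec_sq g j, dotProduct_smul, dot_orthonormal]
    by_cases hij : i = j
    · subst hij
      simp only [if_pos rfl, smul_eq_mul, mul_one]
      have hs : Real.sqrt (a i) ≠ 0 := ne_of_gt (Real.sqrt_pos.mpr (hapos i))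
      have h2 : Real.sqrt (a i) * Real.sqrt (a i) = a i := Real.mul_self_sqrt (le_of_lt (hapos i))
      field_simp
      rw [Real.sq_sqrt (le_of_lt (hapos i)), ha]
    · simp [hij]
  have hon : Orthonormal ℝ uvec := by
    rw [orthonormal_iff_ite]
    intro i j
    rw [inner_eq_dot]
    exact_mod_cast hdot i j
  have hsp : ⊤ ≤ Submodule.span ℝ (Set.range uvec) := by
    rcases Nat.eq_zero_or_pos n with hn | hn
    · subst hn
      intro x _
      have : x = 0 := Subsingleton.elim x 0
      rw [this]; exact Submodule.zero_mem _
    · have : Nonempty (Fin n) := ⟨⟨0, hn⟩⟩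
      rw [hon.linearIndependent.span_eq_top_of_card_eq_finrank
        (by simp [finrank_euclideanSpace_fin])]
  refine ⟨OrthonormalBasis.mk hon hsp, ?_⟩
  intro i
  rw [OrthonormalBasis.coe_mk]
  have h1 : (⇑(uvec i) : Fin n → ℝ) = (Real.sqrt (a i))⁻¹ • (g *ᵥ ⇑(f i)) := rfl
  rw [h1, Matrix.mulVec_smul]
  rw [show (g * gᵀ) *ᵥ (g *ᵥ ⇑(f i)) = g *ᵥ ((gᵀ * g) *ᵥ ⇑(f i)) by
    rw [Matrix.mulVec_mulVec, Matrix.mulVec_mulVec, Matrix.mul_assoc]]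
  rw [mspec_sq g i, Matrix.mulVec_smul, smul_comm]

lemma sq_transpose {g : Matrix (Fin n) (Fin n) ℝ} (hg : IsUnit g.det) :
    sq gᵀ = sq g := by
  obtain ⟨u, hu⟩ := mspec_mul_transpose hg
  have h1 : MSpec (gᵀᵀ * gᵀ) (sq gᵀ) (sqBasis gᵀ) := mspec_sq gᵀ
  rw [Matrix.transpose_transpose] at h1
  exact spec_unique h1 (antitone_sq gᵀ) hu (antitone_sq g)

lemma gram_comp (X Y : Matrix (Fin n) (Fin n) ℝ) (v : Fin n → ℝ) :
    v ⬝ᵥ (((X * Y)ᵀ * (X * Y)) *ᵥ v)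
      = (Y *ᵥ v) ⬝ᵥ ((Xᵀ * X) *ᵥ (Y *ᵥ v)) := by
  rw [← gram_dot (X * Y) v v, ← gram_dot X (Y *ᵥ v) (Y *ᵥ v), ← Matrix.mulVec_mulVec]

lemma det_gram (g : Matrix (Fin n) (Fin n) ℝ) : ∏ i, sq g i = g.det ^ 2 := by
  have h := spec_det (mspec_sq g)
  rw [← h, Matrix.det_mul, Matrix.det_transpose, pow_two]

/-- The Gelfand–Naimark-type inequality. -/
lemma gn_prod (A B : Matrix (Fin n) (Fin n) ℝ) (hA : IsUnit A.det) (hB : IsUnit B.det)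
    (I : Finset (Fin n)) :
    ∏ i ∈ I, sq (A * B) i
      ≤ (∏ i ∈ I, sq B i) * ∏ j ∈ univ.filter (fun j : Fin n => (j : ℕ) < I.card), sq A j := by
  rcases Finset.eq_empty_or_nonempty I with rfl | hI
  · simp
  have hk1 : 1 ≤ I.card := Finset.card_pos.mpr hI
  have hkn : I.card ≤ n := by
    simpa using Finset.card_le_card (Finset.subset_univ I)
  set k := I.card with hk
  have hkk : k - 1 < n := by omega
  set kk : Fin n := ⟨k - 1, hkk⟩ with hkkdef
  set a := sq A with hadef
  set c := a kk with hcdef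
  have hc : 0 < c := sq_pos hA kk
  have hfilter : univ.filter (fun j : Fin n => (j : ℕ) < k) = Finset.Iic kk := by
    ext j
    simp only [Finset.mem_filter, Finset.mem_univ, true_and, Finset.mem_Iic]
    constructor
    · intro hj
      rw [Fin.le_def]
      show (j : ℕ) ≤ k - 1
      omega
    · intro hj
      rw [Fin.le_def] at hj
      have : (j : ℕ) ≤ k - 1 := hj
      omega
  set f := sqBasis A with hfdef
  have hfA : MSpec (Aᵀ * A) a f := mspec_sq A
  have hapos : ∀ i, 0 < a i := fun i => sq_pos hA i
  set ta : Fin n → ℝ := fun i => max (a i) c with htadef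
  have hta_anti : Antitone ta := fun i j hij => max_le_max (antitone_sq A hij) le_rfl
  have hta_pos : ∀ i, 0 < ta i := fun i => lt_of_lt_of_le (hapos i) (le_max_left _ _)
  set ρ : Fin n → ℝ := fun i => Real.sqrt (ta i / a i) with hρdef
  have hρpos : ∀ i, 0 < ρ i := fun i =>
    Real.sqrt_pos.mpr (div_pos (hta_pos i) (hapos i))
  have hρsq : ∀ i, ρ i * ρ i * a i = ta i := by
    intro i
    rw [hρdef]
    rw [Real.mul_self_sqrt (le_of_lt (div_pos (hta_pos i) (hapos i))),
      div_mul_cancel₀ _ (ne_of_gt (hapos i))]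
  set R := specMatrix f ρ with hRdef
  set A' := A * R with hA'def
  -- the eigenvalues of A'ᵀ A'
  have hA'spec : MSpec (A'ᵀ * A') ta f := by
    intro i
    have hfact : A'ᵀ * A' = R * ((Aᵀ * A) * R) := by
      rw [hA'def, Matrix.transpose_mul, specMatrix_transpose, Matrix.mul_assoc,
        Matrix.mul_assoc]
    rw [hfact, ← Matrix.mulVec_mulVec, ← Matrix.mulVec_mulVec, mspec_specMatrix f ρ i,
      Matrix.mulVec_smul, hfA i, smul_smul, Matrix.mulVec_smul, mspec_specMatrix f ρ i,
      smul_smul]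
    rw [show ρ i * a i * ρ i = ρ i * ρ i * a i by ring, hρsq i]
  have hsqA' : sq A' = ta := spec_unique (mspec_sq A') (antitone_sq A') hA'spec hta_anti
  -- determinant bookkeeping
  have hdetR : R.det = ∏ i, ρ i := specMatrix_det f ρ
  have hdetRpos : 0 < R.det := by
    rw [hdetR]; exact Finset.prod_pos fun i _ => hρpos i
  have hA'unit : IsUnit A'.det := by
    rw [hA'def, Matrix.det_mul]
    exact (isUnit_iff_ne_zero.mpr (by
      exact mul_ne_zero (isUnit_iff_ne_zero.mp hA) (ne_of_gt hdetRpos)))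
  have hA'Bunit : IsUnit (A' * B).det := by
    rw [Matrix.det_mul]
    exact hA'unit.mul hB
  -- pointwise quadratic comparisons
  have pointwiseA : ∀ v : Fin n → ℝ, v ⬝ᵥ ((Aᵀ * A) *ᵥ v) ≤ v ⬝ᵥ ((A'ᵀ * A') *ᵥ v) := by
    intro v
    rw [quad_eq hfA, quad_eq hA'spec]
    exact Finset.sum_le_sum fun i _ =>
      mul_le_mul_of_nonneg_right (le_max_left _ _) (_root_.sq_nonneg _)
  have pointwiseC : ∀ v : Fin n → ℝ, c * (v ⬝ᵥ v) ≤ v ⬝ᵥ ((A'ᵀ * A') *ᵥ v) :=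
    fun v => quad_ge_bound hA'spec (fun j => le_max_right _ _) v
  -- step 1 : sq (A*B) ≤ sq (A'*B) componentwise
  have step1 : ∀ k' : Fin n, sq (A * B) k' ≤ sq (A' * B) k' := by
    intro k'
    have := spec_mono (mspec_sq (A * B)) (antitone_sq (A * B)) (mspec_sq (A' * B))
      (antitone_sq (A' * B)) zero_le_one (fun v => by
        rw [one_mul, gram_comp, gram_comp]
        exact pointwiseA (B *ᵥ v)) k'
    rwa [one_mul] at this
  -- step 2 : c * sq B ≤ sq (A'*B) componentwise
  have step2 : ∀ k' : Fin n, c * sq B k' ≤ sq (A' * B) k' := by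
    intro k'
    have h := spec_mono (mspec_sq B) (antitone_sq B) (mspec_sq (A' * B))
      (antitone_sq (A' * B)) (le_of_lt (inv_pos.mpr hc)) (fun v => by
        rw [gram_comp]
        have h2 := pointwiseC (B *ᵥ v)
        have := gram_dot B v v
        rw [← this]
        calc (B *ᵥ v) ⬝ᵥ (B *ᵥ v) ≤ c⁻¹ * (c * ((B *ᵥ v) ⬝ᵥ (B *ᵥ v))) := by
              rw [← mul_assoc, inv_mul_cancel₀ (ne_of_gt hc), one_mul]
          _ ≤ c⁻¹ * ((B *ᵥ v) ⬝ᵥ ((A'ᵀ * A') *ᵥ (B *ᵥ v))) := by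
              exact mul_le_mul_of_nonneg_left h2 (le_of_lt (inv_pos.mpr hc))) k'
    calc c * sq B k' ≤ c * (c⁻¹ * sq (A' * B) k') :=
          mul_le_mul_of_nonneg_left h (le_of_lt hc)
      _ = sq (A' * B) k' := by field_simp
  -- total product of sq (A'*B)
  have htotal : ∏ i, sq (A' * B) i = (∏ i, sq B i) * ∏ i, ta i := by
    have h1 : ∏ i, ta i = (∏ i, a i) * (∏ i, ρ i) ^ 2 := by
      rw [← Finset.prod_pow, ← Finset.prod_mul_distrib]
      exact Finset.prod_congr rfl fun i _ => by
        rw [pow_two]; rw [← hρsq i]; ring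
    rw [det_gram (A' * B), hA'def, Matrix.det_mul, Matrix.det_mul, h1, ← hdetR, hadef,
      mul_pow, mul_pow, ← det_gram A, ← det_gram B]
    ring
  -- product of the modified eigenvalues
  have hprodta : ∏ i, ta i = (∏ j ∈ Finset.Iic kk, a j) * c ^ (n - k) := by
    rw [← Finset.prod_filter_mul_prod_filter_not univ (fun j : Fin n => (j : ℕ) < k) ta,
      hfilter]
    have e1 : ∏ j ∈ Finset.Iic kk, ta j = ∏ j ∈ Finset.Iic kk, a j := by
      refine Finset.prod_congr rfl fun j hj => ?_
      have hjk : j ≤ kk := Finset.mem_Iic.mp hj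
      exact max_eq_left (antitone_sq A hjk)
    have e2 : ∏ j ∈ univ.filter (fun j : Fin n => ¬ (j : ℕ) < k), ta j = c ^ (n - k) := by
      have : ∀ j ∈ univ.filter (fun j : Fin n => ¬ (j : ℕ) < k), ta j = c := by
        intro j hj
        have hjk : ¬ (j : ℕ) < k := (Finset.mem_filter.mp hj).2
        have : kk ≤ j := by
          rw [Fin.le_def]
          show k - 1 ≤ (j : ℕ)
          omega
        exact max_eq_right (antitone_sq A this)
      rw [Finset.prod_congr rfl this, Finset.prod_const]
      congr 1
      have : (univ.filter (fun j : Fin n => ¬ (j : ℕ) < k)).card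
          = n - (univ.filter (fun j : Fin n => (j : ℕ) < k)).card := by
        rw [Finset.filter_not, Finset.card_sdiff_of_subset (Finset.filter_subset _ _)]
        simp
      rw [this, hfilter, Fin.card_Iic]
      simp only [hkkdef]
      omega
    rw [e1, e2]
  -- complement trick
  have hXY : (∏ i ∈ I, sq (A' * B) i) * (∏ i ∈ Iᶜ, sq (A' * B) i)
      = (∏ i, sq B i) * ((∏ j ∈ Finset.Iic kk, a j) * c ^ (n - k)) := by
    rw [Finset.prod_mul_prod_compl, htotal, hprodta]
  have hZY : c ^ (n - k) * (∏ i ∈ Iᶜ, sq B i) ≤ ∏ i ∈ Iᶜ, sq (A' * B) i := by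
    have hcard : Iᶜ.card = n - k := by
      rw [Finset.card_compl]; simp [hk]
    calc c ^ (n - k) * (∏ i ∈ Iᶜ, sq B i) = ∏ i ∈ Iᶜ, (c * sq B i) := by
          rw [Finset.prod_mul_distrib, Finset.prod_const, hcard]
      _ ≤ ∏ i ∈ Iᶜ, sq (A' * B) i :=
          Finset.prod_le_prod (fun i _ => mul_nonneg (le_of_lt hc) (sq_nonneg' B i))
            (fun i _ => step2 i)
  -- assemble
  have hX1 : ∏ i ∈ I, sq (A * B) i ≤ ∏ i ∈ I, sq (A' * B) i :=
    Finset.prod_le_prod (fun i _ => sq_nonneg' (A * B) i) (fun i _ => step1 i)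
  have hT : ((∏ i ∈ I, sq B i) * ∏ j ∈ Finset.Iic kk, a j)
      * (c ^ (n - k) * (∏ i ∈ Iᶜ, sq B i))
      = (∏ i, sq B i) * ((∏ j ∈ Finset.Iic kk, a j) * c ^ (n - k)) := by
    rw [← Finset.prod_mul_prod_compl I (sq B)]
    ring
  have hZpos : 0 < c ^ (n - k) * (∏ i ∈ Iᶜ, sq B i) :=
    mul_pos (pow_pos hc _) (Finset.prod_pos fun i _ => sq_pos hB i)
  have hXfin : ∏ i ∈ I, sq (A' * B) i
      ≤ (∏ i ∈ I, sq B i) * ∏ j ∈ Finset.Iic kk, a j := by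
    have hXnn : 0 ≤ ∏ i ∈ I, sq (A' * B) i :=
      Finset.prod_nonneg fun i _ => sq_nonneg' (A' * B) i
    have key : (∏ i ∈ I, sq (A' * B) i) * (c ^ (n - k) * (∏ i ∈ Iᶜ, sq B i))
        ≤ ((∏ i ∈ I, sq B i) * ∏ j ∈ Finset.Iic kk, a j)
          * (c ^ (n - k) * (∏ i ∈ Iᶜ, sq B i)) := by
      rw [hT]
      calc (∏ i ∈ I, sq (A' * B) i) * (c ^ (n - k) * (∏ i ∈ Iᶜ, sq B i))
          ≤ (∏ i ∈ I, sq (A' * B) i) * (∏ i ∈ Iᶜ, sq (A' * B) i) :=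
            mul_le_mul_of_nonneg_left hZY hXnn
        _ = (∏ i, sq B i) * ((∏ j ∈ Finset.Iic kk, a j) * c ^ (n - k)) := hXY
    exact le_of_mul_le_mul_right key hZpos
  calc ∏ i ∈ I, sq (A * B) i ≤ ∏ i ∈ I, sq (A' * B) i := hX1
    _ ≤ (∏ i ∈ I, sq B i) * ∏ j ∈ Finset.Iic kk, a j := hXfin
    _ = (∏ i ∈ I, sq B i) * ∏ j ∈ univ.filter (fun j : Fin n => (j : ℕ) < I.card), sq A j := by
        rw [hfilter]

lemma abel_identity (u d : ℕ → ℝ) : ∀ N : ℕ,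
    ∑ i ∈ Finset.range (N + 1), u i * d i
      = (∑ k ∈ Finset.range N, (u k - u (k + 1)) * (∑ i ∈ Finset.range (k + 1), d i))
        + u N * (∑ i ∈ Finset.range (N + 1), d i) := by
  intro N
  induction N with
  | zero => simp
  | succ m ih =>
      rw [Finset.sum_range_succ (fun i => u i * d i), ih, Finset.sum_range_succ
        (fun k => (u k - u (k + 1)) * (∑ i ∈ Finset.range (k + 1), d i))]
      rw [Finset.sum_range_succ d (m + 1)]
      ring

lemma abel_nonneg (u d : ℕ → ℝ) (N : ℕ)
    (hu : ∀ k, k + 1 < N → u (k + 1) ≤ u k)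
    (hD : ∀ k, k ≤ N → 0 ≤ ∑ i ∈ Finset.range k, d i)
    (hDN : ∑ i ∈ Finset.range N, d i = 0) :
    0 ≤ ∑ i ∈ Finset.range N, u i * d i := by
  cases N with
  | zero => simp
  | succ m =>
      rw [abel_identity u d m, hDN, mul_zero, add_zero]
      refine Finset.sum_nonneg fun k hk => ?_
      have hkm : k < m := Finset.mem_range.mp hk
      rcases eq_or_lt_of_le (Nat.succ_le_of_lt hkm) with he | hlt
      · -- k + 1 = m : then the partial sum is D_{m}... still fine since k+1 ≤ m+1
        exact mul_nonneg (sub_nonneg.mpr (hu k (by omega))) (hD (k + 1) (by omega))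
      · exact mul_nonneg (sub_nonneg.mpr (hu k (by omega))) (hD (k + 1) (by omega))

lemma card_filter_lt (k : ℕ) (hk : k ≤ n) :
    (univ.filter (fun j : Fin n => (j : ℕ) < k)).card = k := by
  have h : (univ.filter (fun j : Fin n => (j : ℕ) < k)).card = (Finset.range k).card := by
    refine Finset.card_bij (fun j _ => (j : ℕ)) ?_ ?_ ?_
    · intro j hj
      exact Finset.mem_range.mpr (Finset.mem_filter.mp hj).2
    · intro j1 h1 j2 h2 hh
      exact Fin.val_injective hh
    · intro m hm
      have hmn : m < n := lt_of_lt_of_le (Finset.mem_range.mp hm) hk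
      exact ⟨⟨m, hmn⟩, Finset.mem_filter.mpr ⟨Finset.mem_univ _,
        Finset.mem_range.mp hm⟩, rfl⟩
  rw [h, Finset.card_range]

lemma sum_range_eq_sum_filter (g : Fin n → ℝ) (k : ℕ) (hk : k ≤ n) :
    ∑ m ∈ Finset.range k, (if h : m < n then g ⟨m, h⟩ else 0)
      = ∑ i ∈ univ.filter (fun i : Fin n => (i : ℕ) < k), g i := by
  refine Finset.sum_bij'
    (fun (m : ℕ) (hm : m ∈ Finset.range k) =>
      (⟨m, lt_of_lt_of_le (Finset.mem_range.mp hm) hk⟩ : Fin n))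
    (fun (i : Fin n) _ => (i : ℕ)) ?_ ?_ ?_ ?_ ?_
  · intro m hm
    exact Finset.mem_filter.mpr ⟨Finset.mem_univ _, Finset.mem_range.mp hm⟩
  · intro i hi
    exact Finset.mem_range.mpr (Finset.mem_filter.mp hi).2
  · intro m hm; rfl
  · intro i hi; rfl
  · intro m hm
    exact dif_pos (lt_of_lt_of_le (Finset.mem_range.mp hm) hk)

lemma karamata (x y : Fin n → ℝ) (hy : Antitone y)
    (hmaj : ∀ I : Finset (Fin n), ∑ i ∈ I, x i
      ≤ ∑ j ∈ univ.filter (fun j : Fin n => (j : ℕ) < I.card), y j)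
    (hsum : ∑ i, x i = ∑ i, y i) :
    ∑ i, (x i) ^ 2 ≤ ∑ i, (y i) ^ 2 := by
  classical
  set q : Equiv.Perm (Fin n) :=
    (Fin.revPerm.trans (Tuple.sort x)) with hq
  set u : Fin n → ℝ := fun i => x (q i) with hu
  have hu_anti : Antitone u := by
    intro i j hij
    exact Tuple.monotone_sort x (Fin.rev_le_rev.mpr hij)
  have hsum_u : ∑ i, u i = ∑ i, x i := Equiv.sum_comp q x
  have hsq_u : ∑ i, (u i) ^ 2 = ∑ i, (x i) ^ 2 := Equiv.sum_comp q (fun i => (x i) ^ 2)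
  -- top-k majorization for u
  have htop : ∀ k : ℕ, k ≤ n →
      ∑ i ∈ univ.filter (fun i : Fin n => (i : ℕ) < k), u i
        ≤ ∑ j ∈ univ.filter (fun j : Fin n => (j : ℕ) < k), y j := by
    intro k hk
    set S := univ.filter (fun i : Fin n => (i : ℕ) < k) with hS
    have himg : ∑ i ∈ S, u i = ∑ j ∈ S.image q, x j := by
      rw [Finset.sum_image (fun a _ b _ h => q.injective h)]
    have hcard : (S.image q).card = k := by
      rw [Finset.card_image_of_injective _ q.injective, hS, card_filter_lt k hk]
    have h := hmaj (S.image q)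
    rw [hcard] at h
    rw [himg]
    exact h
  -- set up ℕ-indexed data
  set U : ℕ → ℝ := fun m => if h : m < n then u ⟨m, h⟩ else 0 with hU
  set Y : ℕ → ℝ := fun m => if h : m < n then y ⟨m, h⟩ else 0 with hY
  have hrangeU : ∀ k, k ≤ n → ∑ m ∈ Finset.range k, U m
      = ∑ i ∈ univ.filter (fun i : Fin n => (i : ℕ) < k), u i :=
    fun k hk => sum_range_eq_sum_filter u k hk
  have hrangeY : ∀ k, k ≤ n → ∑ m ∈ Finset.range k, Y m
      = ∑ i ∈ univ.filter (fun i : Fin n => (i : ℕ) < k), y i :=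
    fun k hk => sum_range_eq_sum_filter y k hk
  have hfull : (univ.filter (fun i : Fin n => (i : ℕ) < n)) = univ := by
    ext i; simp [i.isLt]
  have habel : 0 ≤ ∑ m ∈ Finset.range n, U m * (Y m - U m) := by
    refine abel_nonneg U (fun m => Y m - U m) n ?_ ?_ ?_
    · intro k hk1
      have hk : k < n := by omega
      rw [hU]
      simp only [dif_pos hk1, dif_pos hk]
      exact hu_anti (by simp [Fin.mk_le_mk])
    · intro k hk
      rw [Finset.sum_sub_distrib, hrangeY k hk, hrangeU k hk, sub_nonneg]
      exact htop k hk
    · rw [Finset.sum_sub_distrib, hrangeY n le_rfl, hrangeU n le_rfl, hfull,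
        hsum_u, hsum]
      ring
  have hT : 0 ≤ ∑ i : Fin n, u i * (y i - u i) := by
    have : ∑ m ∈ Finset.range n, U m * (Y m - U m)
        = ∑ i ∈ univ.filter (fun i : Fin n => (i : ℕ) < n), (fun i => u i * (y i - u i)) i := by
      rw [← sum_range_eq_sum_filter (fun i => u i * (y i - u i)) n le_rfl]
      refine Finset.sum_congr rfl fun m hm => ?_
      have hmn : m < n := Finset.mem_range.mp hm
      rw [hU, hY]
      simp only [dif_pos hmn]
    rw [this, hfull] at habel
    exact habel
  have key : ∑ i, (u i) ^ 2 ≤ ∑ i, (y i) ^ 2 := by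
    have expand : ∑ i, ((y i) ^ 2 - (u i) ^ 2)
        = ∑ i, ((y i - u i) ^ 2 + 2 * (u i * (y i - u i))) := by
      refine Finset.sum_congr rfl fun i _ => by ring
    have h1 : 0 ≤ ∑ i, ((y i) ^ 2 - (u i) ^ 2) := by
      rw [expand, Finset.sum_add_distrib]
      refine add_nonneg (Finset.sum_nonneg fun i _ => _root_.sq_nonneg _) ?_
      rw [← Finset.mul_sum]
      linarith [hT]
    rw [Finset.sum_sub_distrib] at h1
    linarith
  rw [← hsq_u]
  exact key

noncomputable def cproj (g : Matrix (Fin n) (Fin n) ℝ) : EuclideanSpace ℝ (Fin n) :=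
  WithLp.toLp 2 fun i => Real.log (Real.sqrt (sq g i))

lemma cproj_apply (g : Matrix (Fin n) (Fin n) ℝ) (i : Fin n) :
    cproj g i = Real.log (sq g i) / 2 := by
  rw [cproj, PiLp.toLp_apply, Real.log_sqrt (sq_nonneg' g i)]

lemma antitone_cproj {g : Matrix (Fin n) (Fin n) ℝ} (hg : IsUnit g.det) :
    Antitone fun i => cproj g i := by
  intro i j hij
  simp only [cproj_apply]
  have := (Real.log_le_log_iff (sq_pos hg j) (sq_pos hg i)).mpr (antitone_sq g hij)
  linarith

lemma cproj_transpose {g : Matrix (Fin n) (Fin n) ℝ} (hg : IsUnit g.det) :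
    cproj gᵀ = cproj g := by
  have h := sq_transpose hg
  unfold cproj
  rw [h]

lemma cartan_key (A B : Matrix (Fin n) (Fin n) ℝ) (hA : IsUnit A.det) (hB : IsUnit B.det) :
    ‖cproj (A * B) - cproj B‖ ≤ ‖cproj A‖ := by
  have hABunit : IsUnit (A * B).det := by rw [Matrix.det_mul]; exact hA.mul hB
  set x : Fin n → ℝ := fun i => cproj (A * B) i - cproj B i with hx
  set y : Fin n → ℝ := fun i => cproj A i with hy
  have hlog : ∀ (g : Matrix (Fin n) (Fin n) ℝ) (hg : IsUnit g.det) (I : Finset (Fin n)),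
      ∑ i ∈ I, Real.log (sq g i) = Real.log (∏ i ∈ I, sq g i) :=
    fun g hg I => (Real.log_prod (s := I) (fun i _ => ne_of_gt (sq_pos hg i))).symm
  have hmaj : ∀ I : Finset (Fin n), ∑ i ∈ I, x i
      ≤ ∑ j ∈ univ.filter (fun j : Fin n => (j : ℕ) < I.card), y j := by
    intro I
    have hgn := gn_prod A B hA hB I
    have hpos1 : 0 < ∏ i ∈ I, sq (A * B) i :=
      Finset.prod_pos fun i _ => sq_pos hABunit i
    have hpos2 : 0 < ∏ i ∈ I, sq B i := Finset.prod_pos fun i _ => sq_pos hB i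
    have hpos3 : 0 < ∏ j ∈ univ.filter (fun j : Fin n => (j : ℕ) < I.card), sq A j :=
      Finset.prod_pos fun i _ => sq_pos hA i
    have hlog1 := (Real.log_le_log_iff hpos1 (mul_pos hpos2 hpos3)).mpr hgn
    rw [Real.log_mul (ne_of_gt hpos2) (ne_of_gt hpos3)] at hlog1
    rw [← hlog (A * B) hABunit I, ← hlog B hB I, ← hlog A hA _] at hlog1
    have e1 : ∑ i ∈ I, x i
        = (∑ i ∈ I, Real.log (sq (A * B) i)) / 2 - (∑ i ∈ I, Real.log (sq B i)) / 2 := by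
      rw [hx]
      simp only [cproj_apply]
      rw [Finset.sum_sub_distrib, Finset.sum_div, Finset.sum_div]
    have e2 : ∑ j ∈ univ.filter (fun j : Fin n => (j : ℕ) < I.card), y j
        = (∑ j ∈ univ.filter (fun j : Fin n => (j : ℕ) < I.card), Real.log (sq A j)) / 2 := by
      rw [hy]
      simp only [cproj_apply]
      rw [← Finset.sum_div]
    rw [e1, e2]
    linarith
  have hsum : ∑ i, x i = ∑ i, y i := by
    have heq : ∏ i, sq (A * B) i = (∏ i, sq A i) * ∏ i, sq B i := by
      rw [det_gram, Matrix.det_mul, mul_pow, ← det_gram A, ← det_gram B]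
    have e3 : ∑ i, Real.log (sq (A * B) i)
        = ∑ i, Real.log (sq A i) + ∑ i, Real.log (sq B i) := by
      rw [hlog (A * B) hABunit univ, hlog A hA univ, hlog B hB univ, heq,
        Real.log_mul (ne_of_gt (Finset.prod_pos fun i _ => sq_pos hA i))
          (ne_of_gt (Finset.prod_pos fun i _ => sq_pos hB i))]
    have e4 : ∑ i, x i = (∑ i, Real.log (sq (A * B) i)) / 2
        - (∑ i, Real.log (sq B i)) / 2 := by
      rw [hx]; simp only [cproj_apply]
      rw [Finset.sum_sub_distrib, Finset.sum_div, Finset.sum_div]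
    have e5 : ∑ i, y i = (∑ i, Real.log (sq A i)) / 2 := by
      rw [hy]; simp only [cproj_apply]; rw [← Finset.sum_div]
    rw [e4, e5, e3]
    ring
  have hkar := karamata x y (antitone_cproj hA) hmaj hsum
  rw [EuclideanSpace.norm_eq, EuclideanSpace.norm_eq]
  apply Real.sqrt_le_sqrt
  calc ∑ i, ‖(cproj (A * B) - cproj B) i‖ ^ 2 = ∑ i, (x i) ^ 2 := by
        refine Finset.sum_congr rfl fun i _ => ?_
        rw [show (cproj (A * B) - cproj B) i = x i from rfl, Real.norm_eq_abs, sq_abs]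
    _ ≤ ∑ i, (y i) ^ 2 := hkar
    _ = ∑ i, ‖cproj A i‖ ^ 2 := by
        refine Finset.sum_congr rfl fun i _ => ?_
        rw [show y i = cproj A i from rfl, Real.norm_eq_abs, sq_abs]

end CartanAux

lemma cartanProj_eq {n : ℕ} (g : Matrix (Fin n) (Fin n) ℝ) :
    cartanProj g = CartanAux.cproj g := rfl

theorem stmt_11 (n : ℕ) (g g' : SpecialLinearGroup (Fin n) ℝ) :
    ‖cartanProj ((g * g' : SpecialLinearGroup (Fin n) ℝ) : Matrix (Fin n) (Fin n) ℝ)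
        - cartanProj (g : Matrix (Fin n) (Fin n) ℝ)‖
      ≤ ‖cartanProj (g' : Matrix (Fin n) (Fin n) ℝ)‖ ∧
    ‖cartanProj ((g * g' : SpecialLinearGroup (Fin n) ℝ) : Matrix (Fin n) (Fin n) ℝ)
        - cartanProj (g' : Matrix (Fin n) (Fin n) ℝ)‖
      ≤ ‖cartanProj (g : Matrix (Fin n) (Fin n) ℝ)‖ := by
  have hdetg : IsUnit ((g : Matrix (Fin n) (Fin n) ℝ)).det := by
    rw [Matrix.SpecialLinearGroup.det_coe]; exact isUnit_one
  have hdetg' : IsUnit ((g' : Matrix (Fin n) (Fin n) ℝ)).det := by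
    rw [Matrix.SpecialLinearGroup.det_coe]; exact isUnit_one
  have hcoe : ((g * g' : SpecialLinearGroup (Fin n) ℝ) : Matrix (Fin n) (Fin n) ℝ)
      = (g : Matrix (Fin n) (Fin n) ℝ) * (g' : Matrix (Fin n) (Fin n) ℝ) :=
    Matrix.SpecialLinearGroup.coe_mul g g'
  have hdetgg' : IsUnit ((g : Matrix (Fin n) (Fin n) ℝ)
      * (g' : Matrix (Fin n) (Fin n) ℝ)).det := by
    rw [Matrix.det_mul]; exact hdetg.mul hdetg'
  constructor
  · rw [cartanProj_eq, cartanProj_eq, cartanProj_eq, hcoe]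
    have h := CartanAux.cartan_key ((g' : Matrix (Fin n) (Fin n) ℝ))ᵀ
      ((g : Matrix (Fin n) (Fin n) ℝ))ᵀ
      (by rw [Matrix.det_transpose]; exact hdetg')
      (by rw [Matrix.det_transpose]; exact hdetg)
    rw [← Matrix.transpose_mul] at h
    rw [CartanAux.cproj_transpose hdetgg', CartanAux.cproj_transpose hdetg,
      CartanAux.cproj_transpose hdetg'] at h
    exact h
  · rw [cartanProj_eq, cartanProj_eq, cartanProj_eq, hcoe]
    exact CartanAux.cartan_key _ _ hdetg hdetg'
end

section
/- Let x, y ∈ ℝⁿ satisfy x₁ ≥ x₂ ≥ … ≥ x_n ≥ 0 and y₁ ≥ y₂ ≥ … ≥ y_n ≥ 0. Then for every permutation σ of {1,…,n} and every choice of signs ε₁,…,ε_n ∈ {−1,+1}, one has ∑_{i=1}^n (x_i − y_i)² ≤ ∑_{i=1}^n (x_i − ε_i·y_{σ(i)})². -/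
theorem stmt_17 (n : ℕ) (x y : Fin n → ℝ)
    (hxmono : ∀ i j : Fin n, i ≤ j → x j ≤ x i) (hxnonneg : ∀ i, 0 ≤ x i)
    (hymono : ∀ i j : Fin n, i ≤ j → y j ≤ y i) (hynonneg : ∀ i, 0 ≤ y i)
    (σ : Equiv.Perm (Fin n)) (ε : Fin n → ℝ) (hε : ∀ i, ε i = -1 ∨ ε i = 1) :
    ∑ i, (x i - y i) ^ 2 ≤ ∑ i, (x i - ε i * y (σ i)) ^ 2 := by
  have mono : Monovary x y := by
    intro i j hij
    have hji : j ≤ i := by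
      by_contra h
      exact absurd (hymono i j (le_of_not_ge h)) (not_le.2 hij)
    exact hxmono j i hji
  have key1 : ∑ i, x i * y (σ i) ≤ ∑ i, x i * y i :=
    mono.sum_mul_comp_perm_le_sum_mul
  have key2 : ∑ i, x i * (ε i * y (σ i)) ≤ ∑ i, x i * y (σ i) := by
    apply Finset.sum_le_sum
    intro i _
    have : ε i * y (σ i) ≤ y (σ i) := by
      rcases hε i with h | h <;> rw [h] <;> nlinarith [hynonneg (σ i)]
    exact mul_le_mul_of_nonneg_left this (hxnonneg i)
  have hsq : ∀ i, (x i - ε i * y (σ i)) ^ 2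
      = x i ^ 2 - 2 * (x i * (ε i * y (σ i))) + y (σ i) ^ 2 := by
    intro i
    rcases hε i with h | h <;> rw [h] <;> ring
  have hsum2 : ∑ i, (y (σ i)) ^ 2 = ∑ i, y i ^ 2 :=
    Equiv.sum_comp σ (fun i => y i ^ 2)
  calc ∑ i, (x i - y i) ^ 2
      = ∑ i, x i ^ 2 - 2 * ∑ i, x i * y i + ∑ i, y i ^ 2 := by
        rw [Finset.mul_sum, ← Finset.sum_sub_distrib, ← Finset.sum_add_distrib]
        exact Finset.sum_congr rfl fun i _ => by ring
    _ ≤ ∑ i, x i ^ 2 - 2 * ∑ i, x i * (ε i * y (σ i)) + ∑ i, (y (σ i)) ^ 2 := by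
        rw [hsum2]
        have := key2.trans key1
        linarith
    _ = ∑ i, (x i - ε i * y (σ i)) ^ 2 := by
        rw [Finset.mul_sum, ← Finset.sum_sub_distrib, ← Finset.sum_add_distrib]
        exact Finset.sum_congr rfl fun i _ => (hsq i).symm
end

section
/- Let p be a prime and k = 𝔽_p((t)) the field of formal Laurent series over the field with p elements. There exists a subgroup Γ of SL₂(k)×SL₂(k) with the following properties: Γ is infinite; Γ is discrete; every γ ∈ Γ satisfies γ^p = 1; Γ acts properly discontinuously on SL₂(k) by (γ₁,γ₂)·g = γ₁gγ₂⁻¹; both coordinate projections Γ → SL₂(k) have infinite kernel; and there are infinitely many (γ₁,γ₂) ∈ Γ with ‖γ₁‖ < ‖γ₂‖ as well as infinitely many (γ₁,γ₂) ∈ Γ with ‖γ₂‖ < ‖γ₁‖. -/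
/-!
STATEMENT 18: over k = 𝔽_p((t)), there is an infinite discrete subgroup Γ of
SL₂(k)×SL₂(k), of exponent p, acting properly discontinuously on SL₂(k) by
(γ₁,γ₂)·g = γ₁gγ₂⁻¹, whose two coordinate projections have infinite kernels, and
whose Cartan projections hit both sides of the diagonal infinitely often.
-/

open Matrix

/-- `SL₂(𝔽_p((t)))`, where 𝔽_p((t)) is formalized as `LaurentSeries (ZMod p)`. -/
abbrev SL2L (p : ℕ) [Fact p.Prime] := Matrix.SpecialLinearGroup (Fin 2) (LaurentSeries (ZMod p))

/-- The topology on SL₂(k) as a subset of the 2×2 matrices over k = 𝔽_p((t))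
(the topology on k being the t-adic valuation topology). -/
noncomputable instance (p : ℕ) [Fact p.Prime] : TopologicalSpace (SL2L p) :=
  TopologicalSpace.induced
    (fun g => (g : Matrix (Fin 2) (Fin 2) (LaurentSeries (ZMod p)))) inferInstance

-- The absolute value `|x| = p^(−v(x))` on `𝔽_p((t))`, where `v` is the t-adic
-- valuation (the order of vanishing at `t = 0`).
open Classical in
noncomputable def lAbs (p : ℕ) (x : LaurentSeries (ZMod p)) : ℝ :=
  if x = 0 then 0 else (p : ℝ) ^ (-(HahnSeries.order x))

/-- `‖g‖`: the maximum of the absolute values of the four entries of `g`. -/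
noncomputable def sl2LNorm (p : ℕ) [Fact p.Prime] (g : SL2L p) : ℝ :=
  max (max (lAbs p ((g : Matrix (Fin 2) (Fin 2) (LaurentSeries (ZMod p))) 0 0))
           (lAbs p ((g : Matrix (Fin 2) (Fin 2) (LaurentSeries (ZMod p))) 0 1)))
      (max (lAbs p ((g : Matrix (Fin 2) (Fin 2) (LaurentSeries (ZMod p))) 1 0))
           (lAbs p ((g : Matrix (Fin 2) (Fin 2) (LaurentSeries (ZMod p))) 1 1)))

open LaurentSeries HahnSeries Multiplicative WithZero

local notation "ℤₘ₀" => WithZero (Multiplicative ℤ)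

abbrev KK (p : ℕ) := LaurentSeries (ZMod p)

variable (p : ℕ) [Fact p.Prime]

noncomputable def U (a : KK p) : SL2L p := ⟨!![1, a; 0, 1], by simp [Matrix.det_fin_two_of]⟩

@[simp] lemma coe_U (a : KK p) : (U p a : Matrix (Fin 2) (Fin 2) (KK p)) = !![1, a; 0, 1] := rfl

lemma U_mul (a b : KK p) : U p a * U p b = U p (a + b) := by
  apply Subtype.ext
  show (U p a : Matrix (Fin 2) (Fin 2) (KK p)) * (U p b) = _
  rw [coe_U, coe_U, coe_U, Matrix.mul_fin_two]
  congr 1 <;> ring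

lemma U_zero : U p 0 = 1 := by
  apply Subtype.ext
  show (!![1, (0:KK p); 0, 1]) = (1 : Matrix (Fin 2) (Fin 2) (KK p))
  ext i j; fin_cases i <;> fin_cases j <;> simp

lemma U_inv (a : KK p) : (U p a)⁻¹ = U p (-a) := by
  rw [inv_eq_iff_mul_eq_one, U_mul]
  simp [U_zero]

lemma U_inj : Function.Injective (U p) := by
  intro a b h
  have := congrArg (fun g : SL2L p => (g : Matrix (Fin 2) (Fin 2) (KK p)) 0 1) h
  simpa using this

lemma U_pow (a : KK p) (n : ℕ) : (U p a) ^ n = U p (n • a) := by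
  induction n with
  | zero => simp [U_zero]
  | succ n ih => rw [pow_succ, ih, U_mul, succ_nsmul]

lemma charp (a : KK p) : (p : ℕ) • a = 0 := by
  rw [nsmul_eq_mul]
  have : ((p : ℕ) : KK p) = 0 := by
    rw [← map_natCast (HahnSeries.C : ZMod p →+* KK p) p]
    simp [ZMod.natCast_self]
  rw [this, zero_mul]

theorem v_eq_order {f : KK p} (hf : f ≠ 0) :
    Valued.v f = ((Multiplicative.ofAdd (-f.order) : Multiplicative ℤ) : ℤₘ₀) := by
  have h1 : Valued.v f ≤ ((ofAdd (-f.order) : Multiplicative ℤ) : ℤₘ₀) := by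
    rw [show ((ofAdd (-f.order) : Multiplicative ℤ) : ℤₘ₀) = WithZero.exp (-f.order) from rfl,
      LaurentSeries.valuation_le_iff_coeff_lt_eq_zero]
    intro n hn
    by_contra hc
    exact absurd (HahnSeries.order_le_of_coeff_ne_zero hc) (not_le.mpr hn)
  have h2 : ¬ (Valued.v f ≤ ((ofAdd (-(f.order+1)) : Multiplicative ℤ) : ℤₘ₀)) := by
    rw [show ((ofAdd (-(f.order+1)) : Multiplicative ℤ) : ℤₘ₀) = WithZero.exp (-(f.order+1)) from rfl,
      LaurentSeries.valuation_le_iff_coeff_lt_eq_zero]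
    intro h
    exact (HahnSeries.coeff_order_eq_zero.not.mpr hf) (h f.order (by omega))
  have hne : Valued.v f ≠ (0 : ℤₘ₀) := (Valuation.ne_zero_iff _).mpr hf
  rcases WithZero.ne_zero_iff_exists.mp hne with ⟨m, hm⟩
  rw [← hm] at h1 h2 ⊢
  rw [WithZero.coe_le_coe] at h1 h2
  congr 1
  have h1' : Multiplicative.toAdd m ≤ -f.order := h1
  have h2' : ¬ (Multiplicative.toAdd m ≤ -f.order - 1) := by
    intro h
    apply h2
    have h' : m ≤ ofAdd (-f.order - 1) := by
      rw [← ofAdd_toAdd m, Multiplicative.ofAdd_le]; exact h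
    simpa [show (-(f.order + 1)) = -f.order - 1 by ring] using h'
  have : Multiplicative.toAdd m = -f.order := by omega
  rw [← this]; rfl

def latt (e : ℕ → ℤ) : AddSubgroup (KK p) where
  carrier := {x | x.support ⊆ {i | ∃ n, i = -(e n)}}
  zero_mem' := by simp [HahnSeries.support_zero]
  add_mem' := by
    intro a b ha hb
    exact fun i hi => (HahnSeries.support_add_subset a b hi).elim (fun h => ha h) (fun h => hb h)
  neg_mem' := by
    intro a ha
    rw [Set.mem_setOf_eq, HahnSeries.support_neg]
    exact ha

lemma single_mem_Lat (e : ℕ → ℤ) (n : ℕ) (c : ZMod p) :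
    (HahnSeries.single (-(e n)) c : KK p) ∈ latt p e := by
  intro i hi
  have := HahnSeries.eq_of_mem_support_single hi
  exact ⟨n, this⟩

lemma v_mem_Lat (e : ℕ → ℤ) {x : KK p} (hx : x ∈ latt p e) (hx0 : x ≠ 0) :
    ∃ n, Valued.v x = ((ofAdd (e n) : Multiplicative ℤ) : ℤₘ₀) := by
  have horder : x.order ∈ x.support := by
    simp only [HahnSeries.mem_support]
    exact HahnSeries.coeff_order_eq_zero.not.mpr hx0
  obtain ⟨n, hn⟩ := hx (horder)
  exact ⟨n, by rw [v_eq_order p hx0, hn, neg_neg]⟩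

lemma finite_Lat (e : ℕ → ℤ) (he : ∀ n : ℕ, (n : ℤ) < e n) (N : ℤ) :
    {x : KK p | x ∈ latt p e ∧ Valued.v x ≤ ((ofAdd N : Multiplicative ℤ) : ℤₘ₀)}.Finite := by
  classical
  set T : Finset ℤ := (Finset.range N.toNat).image (fun n => -(e n)) with hT
  have hsub : ∀ x ∈ {x : KK p | x ∈ latt p e ∧ Valued.v x ≤ ((ofAdd N : Multiplicative ℤ) : ℤₘ₀)},
      ∀ i, x.coeff i ≠ 0 → i ∈ T := by
    rintro x ⟨hxL, hxv⟩ i hi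
    have hx0 : x ≠ 0 := by
      rintro rfl; exact hi (by simp)
    have hmem : i ∈ x.support := hi
    obtain ⟨n, rfl⟩ := hxL hmem
    have hov : Valued.v x = ((ofAdd (-x.order) : Multiplicative ℤ) : ℤₘ₀) := v_eq_order p hx0
    have : (-x.order) ≤ N := by
      rw [hov, WithZero.coe_le_coe, Multiplicative.ofAdd_le] at hxv
      exact hxv
    have hio : x.order ≤ -(e n) := HahnSeries.order_le_of_coeff_ne_zero hi
    have heN : e n ≤ N := by omega
    have hnN : n < N.toNat := by
      have := he n
      omega
    exact Finset.mem_image.mpr ⟨n, Finset.mem_range.mpr hnN, rfl⟩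
  apply Set.Finite.of_finite_image (f := fun x => (fun i : T => x.coeff i))
  · exact Set.Finite.subset (Set.finite_univ) (Set.subset_univ _)
  · intro x hx y hy hxy
    ext i
    by_cases hiT : i ∈ T
    · exact congrFun hxy ⟨i, hiT⟩
    · have hx0 : x.coeff i = 0 := by
        by_contra h; exact hiT (hsub x hx i h)
      have hy0 : y.coeff i = 0 := by
        by_contra h; exact hiT (hsub y hy i h)
      rw [hx0, hy0]

noncomputable def Vmat (g : Matrix (Fin 2) (Fin 2) (KK p)) : ℤₘ₀ :=
  max (max (Valued.v (g 0 0)) (Valued.v (g 0 1)))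
      (max (Valued.v (g 1 0)) (Valued.v (g 1 1)))

lemma v_entry_le_Vmat (g : Matrix (Fin 2) (Fin 2) (KK p)) (i j : Fin 2) :
    Valued.v (g i j) ≤ Vmat p g := by
  fin_cases i <;> fin_cases j
  · exact le_trans (le_max_left _ _) (le_max_left _ _)
  · exact le_trans (le_max_right _ _) (le_max_left _ _)
  · exact le_trans (le_max_left _ _) (le_max_right _ _)
  · exact le_trans (le_max_right _ _) (le_max_right _ _)

lemma Vmat_mul_le (g h : Matrix (Fin 2) (Fin 2) (KK p)) :
    Vmat p (g * h) ≤ Vmat p g * Vmat p h := by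
  have key : ∀ i j, Valued.v ((g * h) i j) ≤ Vmat p g * Vmat p h := by
    intro i j
    have : (g * h) i j = g i 0 * h 0 j + g i 1 * h 1 j := by
      simp [Matrix.mul_apply, Fin.sum_univ_two]
    rw [this]
    refine le_trans (Valuation.map_add _ _ _ ) ?_
    apply max_le
    · rw [Valuation.map_mul]
      exact mul_le_mul' (v_entry_le_Vmat p g i 0) (v_entry_le_Vmat p h 0 j)
    · rw [Valuation.map_mul]
      exact mul_le_mul' (v_entry_le_Vmat p g i 1) (v_entry_le_Vmat p h 1 j)
  exact max_le (max_le (key 0 0) (key 0 1)) (max_le (key 1 0) (key 1 1))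

lemma Vmat_lit (a b c d : KK p) :
    Vmat p !![a, b; c, d] = max (max (Valued.v a) (Valued.v b)) (max (Valued.v c) (Valued.v d)) := by
  simp [Vmat]

lemma max4 {α : Type*} [LinearOrder α] (a b c d : α) :
    max (max d b) (max c a) = max (max a b) (max c d) := by
  refine le_antisymm (max_le (max_le ?_ ?_) (max_le ?_ ?_)) (max_le (max_le ?_ ?_) (max_le ?_ ?_))
  exacts [le_max_of_le_right (le_max_right _ _), le_max_of_le_left (le_max_right _ _),
    le_max_of_le_right (le_max_left _ _), le_max_of_le_left (le_max_left _ _),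
    le_max_of_le_right (le_max_right _ _), le_max_of_le_left (le_max_right _ _),
    le_max_of_le_right (le_max_left _ _), le_max_of_le_left (le_max_left _ _)]

lemma Vmat_inv (g : SL2L p) :
    Vmat p ((g⁻¹ : SL2L p) : Matrix (Fin 2) (Fin 2) (KK p)) = Vmat p g := by
  have hg : ((g⁻¹ : SL2L p) : Matrix (Fin 2) (Fin 2) (KK p)) =
      !![(g : Matrix (Fin 2) (Fin 2) (KK p)) 1 1, -(g : Matrix (Fin 2) (Fin 2) (KK p)) 0 1;
         -(g : Matrix (Fin 2) (Fin 2) (KK p)) 1 0, (g : Matrix (Fin 2) (Fin 2) (KK p)) 0 0] := by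
    rw [Matrix.SpecialLinearGroup.coe_inv]
    exact Matrix.adjugate_fin_two _
  rw [hg, Vmat_lit, Valuation.map_neg, Valuation.map_neg]
  unfold Vmat
  exact max4 _ _ _ _

lemma one_le_Vmat (g : SL2L p) : 1 ≤ Vmat p (g : Matrix (Fin 2) (Fin 2) (KK p)) := by
  set M := (g : Matrix (Fin 2) (Fin 2) (KK p)) with hM
  have hdet : Valued.v (M.det) = 1 := by
    rw [g.2]; exact Valued.v.map_one
  have hdet2 : (1 : ℤₘ₀) ≤ Vmat p M * Vmat p M := by
    rw [← hdet, Matrix.det_fin_two]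
    refine le_trans (Valuation.map_sub _ _ _) ?_
    apply max_le
    · rw [Valuation.map_mul]
      exact mul_le_mul' (v_entry_le_Vmat p M 0 0) (v_entry_le_Vmat p M 1 1)
    · rw [Valuation.map_mul]
      exact mul_le_mul' (v_entry_le_Vmat p M 0 1) (v_entry_le_Vmat p M 1 0)
  by_contra hlt
  push_neg at hlt
  rcases (eq_or_ne (Vmat p M) 0) with h0 | h0
  · rw [h0, mul_zero] at hdet2
    exact absurd hdet2 (by simp)
  · rcases WithZero.ne_zero_iff_exists.mp h0 with ⟨m, hm⟩
    rw [← hm] at hdet2 hlt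
    rw [← WithZero.coe_mul, ← WithZero.coe_one, WithZero.coe_le_coe] at hdet2
    rw [← WithZero.coe_one, WithZero.coe_lt_coe] at hlt
    have h1 : (0 : ℤ) ≤ Multiplicative.toAdd m + Multiplicative.toAdd m := hdet2
    have h2 : Multiplicative.toAdd m < 0 := hlt
    omega

lemma ofz_le (a b : ℤ) :
    ((ofAdd a : Multiplicative ℤ) : ℤₘ₀) ≤ ((ofAdd b : Multiplicative ℤ) : ℤₘ₀) ↔ a ≤ b := by
  rw [WithZero.coe_le_coe, Multiplicative.ofAdd_le]

lemma isOpen_vball (γ : ℤₘ₀) (hγ : γ ≠ 0) (c : KK p) :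
    IsOpen {x : KK p | Valued.v (x - c) < γ} := by
  rcases WithZero.ne_zero_iff_exists.mp hγ with ⟨m, rfl⟩
  have hz0 : (HahnSeries.single (-(toAdd m)) (1 : ZMod p) : KK p) ≠ 0 :=
    HahnSeries.single_ne_zero one_ne_zero
  have hv : Valued.v (HahnSeries.single (-(toAdd m)) (1 : ZMod p) : KK p) = (m : ℤₘ₀) := by
    rw [v_eq_order p hz0, HahnSeries.order_single one_ne_zero, neg_neg, ofAdd_toAdd]
  have hset : {x : KK p | Valued.v (x - c) < (m : ℤₘ₀)} = (fun x => x - c) ⁻¹'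
      {y | Valued.v.restrict y < Valued.v.restrict (HahnSeries.single (-(toAdd m)) (1 : ZMod p) : KK p)} := by
    ext x; simp only [Set.mem_setOf_eq, Set.mem_preimage, Valuation.restrict_lt_iff, hv]
  rw [hset]
  exact (Valued.isOpen_ball _ _).preimage (continuous_sub_right c)

lemma vbounded_of_compact {S : Set (KK p)} (hS : IsCompact S) :
    ∃ N : ℤ, ∀ x ∈ S, Valued.v x ≤ ((ofAdd N : Multiplicative ℤ) : ℤₘ₀) := by
  have hcover : S ⊆ ⋃ n : ℕ, {x : KK p | Valued.v (x - 0) < ((ofAdd (n : ℤ) : Multiplicative ℤ) : ℤₘ₀)} := by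
    intro x _
    simp only [Set.mem_iUnion, Set.mem_setOf_eq, sub_zero]
    rcases eq_or_ne (Valued.v x) 0 with h0 | h0
    · exact ⟨1, by rw [h0]; exact WithZero.zero_lt_coe _⟩
    · rcases WithZero.ne_zero_iff_exists.mp h0 with ⟨m, hm⟩
      refine ⟨(Multiplicative.toAdd m).toNat + 1, ?_⟩
      rw [← hm, WithZero.coe_lt_coe, ← ofAdd_toAdd m, Multiplicative.ofAdd_lt]
      simp only [toAdd_ofAdd]; push_cast; omega
  obtain ⟨t, ht⟩ := hS.elim_finite_subcover _
    (fun n : ℕ => isOpen_vball p _ (WithZero.coe_ne_zero) 0) hcover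
  refine ⟨(t.sup id : ℕ), fun x hx => ?_⟩
  obtain ⟨n, hn, hxn⟩ := Set.mem_iUnion₂.mp (ht hx)
  simp only [Set.mem_setOf_eq, sub_zero] at hxn
  refine le_trans (le_of_lt hxn) ?_
  rw [ofz_le]
  exact_mod_cast Nat.cast_le.mpr (Finset.le_sup (f := id) hn)

lemma entry_continuous (i j : Fin 2) :
    Continuous (fun g : SL2L p => (g : Matrix (Fin 2) (Fin 2) (KK p)) i j) :=
  (continuous_apply j).comp ((continuous_apply i).comp continuous_induced_dom)

lemma Vmat_bounded_of_compact {K : Set (SL2L p)} (hK : IsCompact K) :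
    ∃ N : ℤ, 0 ≤ N ∧ ∀ g ∈ K, Vmat p (g : Matrix (Fin 2) (Fin 2) (KK p)) ≤
      ((ofAdd N : Multiplicative ℤ) : ℤₘ₀) := by
  have hb : ∀ i j : Fin 2, ∃ N : ℤ, ∀ g ∈ K,
      Valued.v ((g : Matrix (Fin 2) (Fin 2) (KK p)) i j) ≤ ((ofAdd N : Multiplicative ℤ) : ℤₘ₀) := by
    intro i j
    obtain ⟨N, hN⟩ := vbounded_of_compact p (hK.image (entry_continuous p i j))
    exact ⟨N, fun g hg => hN _ ⟨g, hg, rfl⟩⟩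
  obtain ⟨N00, h00⟩ := hb 0 0
  obtain ⟨N01, h01⟩ := hb 0 1
  obtain ⟨N10, h10⟩ := hb 1 0
  obtain ⟨N11, h11⟩ := hb 1 1
  refine ⟨max 0 (max (max N00 N01) (max N10 N11)), le_max_left _ _, fun g hg => ?_⟩
  have hle : ∀ a : ℤ, a ≤ max 0 (max (max N00 N01) (max N10 N11)) →
      ((ofAdd a : Multiplicative ℤ) : ℤₘ₀) ≤ _ := fun a ha => (ofz_le _ _).mpr ha
  apply max_le <;> apply max_le
  · exact le_trans (h00 g hg) ((ofz_le _ _).mpr (by omega))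
  · exact le_trans (h01 g hg) ((ofz_le _ _).mpr (by omega))
  · exact le_trans (h10 g hg) ((ofz_le _ _).mpr (by omega))
  · exact le_trans (h11 g hg) ((ofz_le _ _).mpr (by omega))

noncomputable def zexp (a : ℤ) : ℤₘ₀ := ((ofAdd a : Multiplicative ℤ) : ℤₘ₀)

lemma zexp_le {a b : ℤ} : zexp a ≤ zexp b ↔ a ≤ b := ofz_le a b

lemma zexp_mul (a b : ℤ) : zexp a * zexp b = zexp (a + b) := by
  rw [zexp, zexp, zexp, ← WithZero.coe_mul, ← ofAdd_add]

lemma zexp_zero : zexp 0 = 1 := by rw [zexp, ofAdd_zero, WithZero.coe_one]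

lemma zexp_ne_zero (a : ℤ) : zexp a ≠ 0 := WithZero.coe_ne_zero

lemma one_le_zexp {a : ℤ} (h : 0 ≤ a) : 1 ≤ zexp a := by
  rw [← zexp_zero, zexp_le]; exact h

lemma pow2_gap_aux {s t : ℕ} (h : s < t) {c : ℤ} (hc : (2:ℤ)^t - 2^s ≤ c) :
    (2:ℤ)^t ≤ 2*c := by
  have h1 : (2:ℤ)^s ≤ 2^(t-1) := pow_le_pow_right₀ (by norm_num) (by omega)
  have h2 : (2:ℤ)^t = 2*2^(t-1) := by
    rw [← pow_succ']
    congr 1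
    omega
  linarith

lemma pow2_gap {s t : ℕ} (hst : s ≠ t) {c : ℤ} (h : |(2:ℤ)^s - 2^t| ≤ c) :
    (2:ℤ)^s ≤ 2*c ∧ (2:ℤ)^t ≤ 2*c := by
  rcases lt_or_gt_of_ne hst with hlt | hgt
  · have habs : (2:ℤ)^t - 2^s ≤ c := le_trans (le_abs_self _) (by rwa [abs_sub_comm] at h)
    have ht := pow2_gap_aux hlt habs
    have hs : (2:ℤ)^s ≤ 2^t := pow_le_pow_right₀ (by norm_num) (le_of_lt hlt)
    exact ⟨le_trans hs ht, ht⟩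
  · have habs : (2:ℤ)^s - 2^t ≤ c := le_trans (le_abs_self _) h
    have hs := pow2_gap_aux hgt habs
    have ht : (2:ℤ)^t ≤ 2^s := pow_le_pow_right₀ (by norm_num) (le_of_lt hgt)
    exact ⟨hs, le_trans ht hs⟩

def eA (n : ℕ) : ℤ := 4^n
def eB (n : ℕ) : ℤ := 2 * 4^n

lemma eA_pos (n : ℕ) : (n : ℤ) < eA n := by
  have : (n : ℤ) < 2^n := by exact_mod_cast @Nat.lt_two_pow_self n
  have h2 : (2:ℤ)^n ≤ 4^n := pow_le_pow_left₀ (by norm_num) (by norm_num) n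
  unfold eA; omega

lemma eB_pos (n : ℕ) : (n : ℤ) < eB n := by
  have h := eA_pos n
  have h4 : (0:ℤ) < 4^n := by positivity
  unfold eA at h
  unfold eB
  omega

lemma eA_as_pow2 (n : ℕ) : eA n = (2:ℤ)^(2*n) := by
  unfold eA; rw [pow_mul]; norm_num

lemma eB_as_pow2 (n : ℕ) : eB n = (2:ℤ)^(2*n+1) := by
  unfold eB; rw [pow_succ, pow_mul]; ring_nf

lemma bound_of_two_sided {a b : KK p} (ha : a ∈ latt p eA) (hb : b ∈ latt p eB)
    {C : ℤ} (hC : 0 ≤ C)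
    (h1 : max 1 (Valued.v a) ≤ zexp (2*C) * max 1 (Valued.v b))
    (h2 : max 1 (Valued.v b) ≤ zexp (2*C) * max 1 (Valued.v a)) :
    Valued.v a ≤ zexp (4*C + 2) ∧ Valued.v b ≤ zexp (4*C + 2) := by
  rcases eq_or_ne a 0 with rfl | ha0
  · simp only [map_zero] at h2 ⊢
    constructor
    · exact le_trans (le_of_eq rfl) (le_trans zero_le' le_rfl)
    · have : max (1:ℤₘ₀) (Valued.v b) ≤ zexp (2*C) := by
        rw [show max (1:ℤₘ₀) 0 = 1 from max_eq_left zero_le', mul_one] at h2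
        exact h2
      exact le_trans (le_trans (le_max_right 1 _) this) (zexp_le.mpr (by omega))
  rcases eq_or_ne b 0 with rfl | hb0
  · simp only [map_zero] at h1 ⊢
    constructor
    · have : max (1:ℤₘ₀) (Valued.v a) ≤ zexp (2*C) := by
        rw [show max (1:ℤₘ₀) 0 = 1 from max_eq_left zero_le', mul_one] at h1
        exact h1
      exact le_trans (le_trans (le_max_right 1 _) this) (zexp_le.mpr (by omega))
    · exact zero_le'
  obtain ⟨n, hn⟩ := v_mem_Lat p eA ha ha0
  obtain ⟨m, hm⟩ := v_mem_Lat p eB hb hb0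
  have hva : Valued.v a = zexp (eA n) := hn
  have hvb : Valued.v b = zexp (eB m) := hm
  have hmaxa : max 1 (Valued.v a) = zexp (eA n) := by
    rw [hva, max_eq_right]
    exact one_le_zexp (by have := eA_pos n; omega)
  have hmaxb : max 1 (Valued.v b) = zexp (eB m) := by
    rw [hvb, max_eq_right]
    exact one_le_zexp (by have := eB_pos m; omega)
  rw [hmaxa, hmaxb, zexp_mul] at h1 h2
  rw [zexp_le] at h1 h2
  -- now : eA n ≤ 2C + eB m and eB m ≤ 2C + eA n
  have habs : |(2:ℤ)^(2*n) - 2^(2*m+1)| ≤ 2*C := by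
    rw [← eA_as_pow2, ← eB_as_pow2, abs_le]
    omega
  have hne : 2*n ≠ 2*m+1 := by omega
  obtain ⟨hgA, hgB⟩ := pow2_gap hne habs
  rw [← eA_as_pow2] at hgA
  rw [← eB_as_pow2] at hgB
  constructor
  · rw [hva, zexp_le]; omega
  · rw [hvb, zexp_le]; omega

noncomputable def GG : Subgroup (SL2L p × SL2L p) where
  carrier := {γ | ∃ a ∈ latt p eA, ∃ b ∈ latt p eB, γ = (U p a, U p b)}
  one_mem' := ⟨0, (latt p eA).zero_mem, 0, (latt p eB).zero_mem, by rw [U_zero]; rfl⟩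
  mul_mem' := by
    rintro x y ⟨a, ha, b, hb, rfl⟩ ⟨a', ha', b', hb', rfl⟩
    exact ⟨a + a', (latt p eA).add_mem ha ha', b + b', (latt p eB).add_mem hb hb',
      by rw [Prod.mk_mul_mk, U_mul, U_mul]⟩
  inv_mem' := by
    rintro x ⟨a, ha, b, hb, rfl⟩
    exact ⟨-a, (latt p eA).neg_mem ha, -b, (latt p eB).neg_mem hb,
      by rw [Prod.inv_mk, U_inv, U_inv]⟩

lemma mem_GG {γ : SL2L p × SL2L p} :
    γ ∈ GG p ↔ ∃ a ∈ latt p eA, ∃ b ∈ latt p eB, γ = (U p a, U p b) := Iff.rfl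

lemma U_entry (a : KK p) : (U p a : Matrix (Fin 2) (Fin 2) (KK p)) 0 1 = a := by
  rw [coe_U]; simp

lemma Vmat_U (a : KK p) :
    Vmat p (U p a : Matrix (Fin 2) (Fin 2) (KK p)) = max 1 (Valued.v a) := by
  rw [coe_U, Vmat_lit, Valuation.map_one, Valuation.map_zero]
  rw [show max (0:ℤₘ₀) 1 = 1 from max_eq_right zero_le']
  exact max_eq_left (le_max_left _ _)

-- distinct lattice elements are far apart
lemma latt_separated (e : ℕ → ℤ) (he : ∀ n : ℕ, (n : ℤ) < e n) {a a' : KK p}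
    (ha : a ∈ latt p e) (ha' : a' ∈ latt p e) (h : Valued.v (a' - a) < 1) : a' = a := by
  by_contra hne
  have hmem : a' - a ∈ latt p e := (latt p e).sub_mem ha' ha
  have h0 : a' - a ≠ 0 := sub_ne_zero_of_ne hne
  obtain ⟨n, hn⟩ := v_mem_Lat p e hmem h0
  rw [hn, ← zexp_zero] at h
  rw [show ((ofAdd (e n) : Multiplicative ℤ) : ℤₘ₀) = zexp (e n) from rfl] at h
  have := zexp_le.mp (le_of_lt h)
  have := he n
  omega

lemma discrete_GG : DiscreteTopology (GG p) := by
  rw [discreteTopology_iff_isOpen_singleton]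
  rintro ⟨γ, hγ⟩
  obtain ⟨a, ha, b, hb, rfl⟩ := hγ
  set O : Set (SL2L p × SL2L p) :=
    (fun x : SL2L p × SL2L p => (x.1 : Matrix (Fin 2) (Fin 2) (KK p)) 0 1) ⁻¹'
        {y | Valued.v (y - a) < 1} ∩
    (fun x : SL2L p × SL2L p => (x.2 : Matrix (Fin 2) (Fin 2) (KK p)) 0 1) ⁻¹'
        {y | Valued.v (y - b) < 1} with hO
  have hOopen : IsOpen O := by
    apply IsOpen.inter
    · exact (isOpen_vball p 1 one_ne_zero a).preimage
        ((entry_continuous p 0 1).comp continuous_fst)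
    · exact (isOpen_vball p 1 one_ne_zero b).preimage
        ((entry_continuous p 0 1).comp continuous_snd)
  have key : {(⟨(U p a, U p b), ⟨a, ha, b, hb, rfl⟩⟩ : GG p)} = Subtype.val ⁻¹' O := by
    ext ⟨δ, hδ⟩
    obtain ⟨a', ha', b', hb', rfl⟩ := hδ
    simp only [Set.mem_singleton_iff, Set.mem_preimage, hO, Set.mem_inter_iff,
      Set.mem_setOf_eq, U_entry, Subtype.mk_eq_mk, Prod.mk.injEq]
    simp only [Subtype.ext_iff, Prod.mk.injEq]
    constructor
    · rintro ⟨h1, h2⟩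
      have ha'' : a' = a := U_inj p h1
      have hb'' : b' = b := U_inj p h2
      subst ha''; subst hb''
      have hz : Valued.v ((0:KK p)) < 1 := by
        rw [Valuation.map_zero]
        exact zero_lt_iff.mpr one_ne_zero
      rw [sub_self, sub_self]
      exact ⟨hz, hz⟩
    · rintro ⟨h1, h2⟩
      have ha'' : a' = a := latt_separated p eA eA_pos ha ha' h1
      have hb'' : b' = b := latt_separated p eB eB_pos hb hb' h2
      subst ha''; subst hb''
      exact ⟨rfl, rfl⟩
  rw [key]
  exact hOopen.preimage continuous_subtype_val

lemma proper_GG (K L : Set (SL2L p)) (hK : IsCompact K) (hL : IsCompact L) :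
    {γ : GG p | ((fun g => (γ : SL2L p × SL2L p).1 * g * ((γ : SL2L p × SL2L p).2)⁻¹) '' K ∩ L).Nonempty}.Finite := by
  obtain ⟨NK, hNK0, hNK⟩ := Vmat_bounded_of_compact p hK
  obtain ⟨NL, hNL0, hNL⟩ := Vmat_bounded_of_compact p hL
  set C : ℤ := NK + NL with hC
  set D : ℤ := 4*C + 2 with hD
  have hfinA := finite_Lat p eA eA_pos D
  have hfinB := finite_Lat p eB eB_pos D
  apply Set.Finite.of_finite_image (f := fun γ : GG p =>
    ((((γ : SL2L p × SL2L p)).1 : Matrix (Fin 2) (Fin 2) (KK p)) 0 1,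
     (((γ : SL2L p × SL2L p)).2 : Matrix (Fin 2) (Fin 2) (KK p)) 0 1))
  · apply Set.Finite.subset (hfinA.prod hfinB)
    rintro ⟨s1, s2⟩ ⟨γ, hγset, hfeq⟩
    obtain ⟨a, ha, b, hb, hval⟩ := γ.2
    obtain ⟨l, ⟨⟨x, hxK, hxl⟩, hlL⟩⟩ := hγset
    rw [hval] at hxl
    simp only [hval, U_entry] at hfeq
    injection hfeq with hs1 hs2
    subst hs1; subst hs2
    -- the key valuation estimates
    have hUa : U p a = l * U p b * x⁻¹ := by rw [← hxl]; group
    have hUb : U p b = l⁻¹ * U p a * x := by rw [← hxl]; group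
    have hVx : Vmat p (x : Matrix (Fin 2) (Fin 2) (KK p)) ≤ zexp NK := hNK x hxK
    have hVxi : Vmat p ((x⁻¹ : SL2L p) : Matrix (Fin 2) (Fin 2) (KK p)) ≤ zexp NK := by
      rw [Vmat_inv]; exact hVx
    have hVl : Vmat p (l : Matrix (Fin 2) (Fin 2) (KK p)) ≤ zexp NL := hNL l hlL
    have hVli : Vmat p ((l⁻¹ : SL2L p) : Matrix (Fin 2) (Fin 2) (KK p)) ≤ zexp NL := by
      rw [Vmat_inv]; exact hVl
    have key1 : max 1 (Valued.v a) ≤ zexp (2*C) * max 1 (Valued.v b) := by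
      have h1 : Vmat p ((U p a : SL2L p) : Matrix (Fin 2) (Fin 2) (KK p)) ≤
          zexp NL * max 1 (Valued.v b) * zexp NK := by
        rw [hUa]
        calc Vmat p ((l * U p b * x⁻¹ : SL2L p) : Matrix (Fin 2) (Fin 2) (KK p))
            ≤ Vmat p ((l * U p b : SL2L p) : Matrix (Fin 2) (Fin 2) (KK p)) *
              Vmat p ((x⁻¹ : SL2L p) : Matrix (Fin 2) (Fin 2) (KK p)) := by
              rw [Matrix.SpecialLinearGroup.coe_mul]
              exact Vmat_mul_le p _ _
          _ ≤ zexp NL * max 1 (Valued.v b) * zexp NK := by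
              refine mul_le_mul' ?_ hVxi
              rw [Matrix.SpecialLinearGroup.coe_mul]
              exact le_trans (Vmat_mul_le p _ _)
                (mul_le_mul' hVl (le_of_eq (Vmat_U p b)))
      rw [Vmat_U] at h1
      refine le_trans h1 ?_
      rw [mul_right_comm, zexp_mul]
      refine mul_le_mul' (zexp_le.mpr (by omega)) le_rfl
    have key2 : max 1 (Valued.v b) ≤ zexp (2*C) * max 1 (Valued.v a) := by
      have h1 : Vmat p ((U p b : SL2L p) : Matrix (Fin 2) (Fin 2) (KK p)) ≤
          zexp NL * max 1 (Valued.v a) * zexp NK := by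
        rw [hUb]
        calc Vmat p ((l⁻¹ * U p a * x : SL2L p) : Matrix (Fin 2) (Fin 2) (KK p))
            ≤ Vmat p ((l⁻¹ * U p a : SL2L p) : Matrix (Fin 2) (Fin 2) (KK p)) *
              Vmat p ((x : SL2L p) : Matrix (Fin 2) (Fin 2) (KK p)) := by
              rw [Matrix.SpecialLinearGroup.coe_mul]
              exact Vmat_mul_le p _ _
          _ ≤ zexp NL * max 1 (Valued.v a) * zexp NK := by
              refine mul_le_mul' ?_ hVx
              rw [Matrix.SpecialLinearGroup.coe_mul]
              exact le_trans (Vmat_mul_le p _ _)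
                (mul_le_mul' hVli (le_of_eq (Vmat_U p a)))
      rw [Vmat_U] at h1
      refine le_trans h1 ?_
      rw [mul_right_comm, zexp_mul]
      refine mul_le_mul' (zexp_le.mpr (by omega)) le_rfl
    obtain ⟨hva, hvb⟩ := bound_of_two_sided p ha hb (by omega) key1 key2
    exact Set.mem_prod.mpr ⟨⟨ha, hva⟩, ⟨hb, hvb⟩⟩
  · intro γ _ δ _ hfeq
    obtain ⟨a, ha, b, hb, hvalγ⟩ := γ.2
    obtain ⟨a', ha', b', hb', hvalδ⟩ := δ.2
    simp only [hvalγ, hvalδ, U_entry, Prod.mk.injEq] at hfeq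
    obtain ⟨h1, h2⟩ := hfeq
    apply Subtype.ext
    rw [hvalγ, hvalδ, h1, h2]

lemma prod_pow {M N : Type*} [Monoid M] [Monoid N] (x : M) (y : N) (n : ℕ) :
    (x, y) ^ n = (x ^ n, y ^ n) := by
  induction n with
  | zero => simp; rfl
  | succ n ih => rw [pow_succ, ih, pow_succ, pow_succ]; rfl

lemma lAbs_zero : lAbs p 0 = 0 := if_pos rfl

lemma lAbs_one : lAbs p (1 : KK p) = 1 := by
  unfold lAbs
  rw [if_neg one_ne_zero, HahnSeries.order_one, neg_zero, zpow_zero]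

noncomputable def sA (n : ℕ) : KK p := HahnSeries.single (-(eA n)) (1 : ZMod p)
noncomputable def sB (n : ℕ) : KK p := HahnSeries.single (-(eB n)) (1 : ZMod p)

lemma sA_mem (n : ℕ) : sA p n ∈ latt p eA := single_mem_Lat p eA n 1
lemma sB_mem (n : ℕ) : sB p n ∈ latt p eB := single_mem_Lat p eB n 1

lemma lAbs_sA (n : ℕ) : lAbs p (sA p n) = (p : ℝ) ^ (eA n) := by
  unfold lAbs sA
  rw [if_neg (HahnSeries.single_ne_zero one_ne_zero),
    HahnSeries.order_single one_ne_zero, neg_neg]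

lemma lAbs_sB (n : ℕ) : lAbs p (sB p n) = (p : ℝ) ^ (eB n) := by
  unfold lAbs sB
  rw [if_neg (HahnSeries.single_ne_zero one_ne_zero),
    HahnSeries.order_single one_ne_zero, neg_neg]

lemma sA_inj : Function.Injective (sA p) := by
  intro n m h
  have := congrArg (fun x : KK p => x.coeff (-(eA n))) h
  simp only [sA, HahnSeries.coeff_single_same] at this
  rw [HahnSeries.coeff_single] at this
  by_contra hnm
  have hne : -(eA n) ≠ -(eA m) := by
    intro he
    apply hnm
    have hmono : StrictMono eA := by
      intro _ _ hlt
      unfold eA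
      exact pow_lt_pow_right₀ (by norm_num) hlt
    exact hmono.injective (show eA n = eA m by omega)
  rw [if_neg hne] at this
  exact one_ne_zero this

lemma sB_inj : Function.Injective (sB p) := by
  intro n m h
  have := congrArg (fun x : KK p => x.coeff (-(eB n))) h
  simp only [sB, HahnSeries.coeff_single_same] at this
  rw [HahnSeries.coeff_single] at this
  by_contra hnm
  have hne : -(eB n) ≠ -(eB m) := by
    intro he
    apply hnm
    have hmono : StrictMono eB := by
      intro _ _ hlt
      have := pow_lt_pow_right₀ (show (1:ℤ) < 4 by norm_num) hlt
      unfold eB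
      omega
    exact hmono.injective (show eB n = eB m by omega)
  rw [if_neg hne] at this
  exact one_ne_zero this

lemma sl2LNorm_one : sl2LNorm p (1 : SL2L p) = 1 := by
  unfold sl2LNorm
  have hcoe : ((1 : SL2L p) : Matrix (Fin 2) (Fin 2) (KK p)) = 1 := rfl
  rw [hcoe]
  rw [show (1 : Matrix (Fin 2) (Fin 2) (KK p)) 0 0 = 1 from Matrix.one_apply_eq 0]
  rw [show (1 : Matrix (Fin 2) (Fin 2) (KK p)) 1 1 = 1 from Matrix.one_apply_eq 1]
  rw [show (1 : Matrix (Fin 2) (Fin 2) (KK p)) 0 1 = 0 from Matrix.one_apply_ne (by decide)]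
  rw [show (1 : Matrix (Fin 2) (Fin 2) (KK p)) 1 0 = 0 from Matrix.one_apply_ne (by decide)]
  rw [lAbs_one, lAbs_zero]
  norm_num

lemma lAbs_nonneg (x : KK p) : 0 ≤ lAbs p x := by
  unfold lAbs
  split
  · exact le_refl 0
  · positivity

lemma sl2LNorm_U (a : KK p) : sl2LNorm p (U p a) = max 1 (lAbs p a) := by
  unfold sl2LNorm
  rw [coe_U]
  have e00 : (!![1, a; 0, 1] : Matrix (Fin 2) (Fin 2) (KK p)) 0 0 = 1 := rfl
  have e01 : (!![1, a; 0, 1] : Matrix (Fin 2) (Fin 2) (KK p)) 0 1 = a := rfl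
  have e10 : (!![1, a; 0, 1] : Matrix (Fin 2) (Fin 2) (KK p)) 1 0 = 0 := rfl
  have e11 : (!![1, a; 0, 1] : Matrix (Fin 2) (Fin 2) (KK p)) 1 1 = 1 := rfl
  rw [e00, e01, e10, e11, lAbs_one, lAbs_zero]
  rw [show max (0:ℝ) 1 = 1 by norm_num]
  exact max_eq_left (le_max_left _ _)

lemma one_lt_p : (1 : ℝ) < p := by
  exact_mod_cast (Fact.out : p.Prime).one_lt

lemma norm_sA_gt (n : ℕ) : 1 < lAbs p (sA p n) := by
  rw [lAbs_sA]
  exact one_lt_zpow₀ (one_lt_p p) (by have := eA_pos n; omega)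

lemma norm_sB_gt (n : ℕ) : 1 < lAbs p (sB p n) := by
  rw [lAbs_sB]
  exact one_lt_zpow₀ (one_lt_p p) (by have := eB_pos n; omega)

theorem stmt_18 (p : ℕ) [Fact p.Prime] :
    ∃ Γ : Subgroup (SL2L p × SL2L p),
      -- Γ is infinite:
      (Γ : Set (SL2L p × SL2L p)).Infinite ∧
      -- Γ is discrete:
      DiscreteTopology Γ ∧
      -- every γ ∈ Γ satisfies γ^p = 1:
      (∀ γ ∈ Γ, γ ^ p = 1) ∧
      -- Γ acts properly discontinuously on SL₂(k) by (γ₁,γ₂)·g = γ₁gγ₂⁻¹ :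
      (∀ K L : Set (SL2L p), IsCompact K → IsCompact L →
        {γ : Γ | ((fun g => (γ : SL2L p × SL2L p).1 * g * ((γ : SL2L p × SL2L p).2)⁻¹) '' K ∩ L).Nonempty}.Finite) ∧
      -- the kernels of both coordinate projections are infinite:
      {γ : SL2L p × SL2L p | γ ∈ Γ ∧ γ.1 = 1}.Infinite ∧
      {γ : SL2L p × SL2L p | γ ∈ Γ ∧ γ.2 = 1}.Infinite ∧
      -- both strict inequalities between the norms occur infinitely often:
      {γ : SL2L p × SL2L p | γ ∈ Γ ∧ sl2LNorm p γ.1 < sl2LNorm p γ.2}.Infinite ∧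
      {γ : SL2L p × SL2L p | γ ∈ Γ ∧ sl2LNorm p γ.2 < sl2LNorm p γ.1}.Infinite := by
  have memA : ∀ n : ℕ, (U p (sA p n), (1:SL2L p)) ∈ GG p :=
    fun n => ⟨sA p n, sA_mem p n, 0, (latt p eB).zero_mem, by rw [U_zero]⟩
  have memB : ∀ n : ℕ, ((1:SL2L p), U p (sB p n)) ∈ GG p :=
    fun n => ⟨0, (latt p eA).zero_mem, sB p n, sB_mem p n, by rw [U_zero]⟩
  have injA : Function.Injective (fun n : ℕ => ((U p (sA p n), (1:SL2L p)) : SL2L p × SL2L p)) := by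
    intro n m h
    exact sA_inj p (U_inj p (congrArg Prod.fst h))
  have injB : Function.Injective (fun n : ℕ => (((1:SL2L p), U p (sB p n)) : SL2L p × SL2L p)) := by
    intro n m h
    exact sB_inj p (U_inj p (congrArg Prod.snd h))
  have normA : ∀ n : ℕ, sl2LNorm p (U p (sA p n)) = lAbs p (sA p n) := by
    intro n
    rw [sl2LNorm_U]
    exact max_eq_right (le_of_lt (norm_sA_gt p n))
  have normB : ∀ n : ℕ, sl2LNorm p (U p (sB p n)) = lAbs p (sB p n) := by
    intro n
    rw [sl2LNorm_U]
    exact max_eq_right (le_of_lt (norm_sB_gt p n))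
  refine ⟨GG p, ?_, discrete_GG p, ?_, proper_GG p, ?_, ?_, ?_, ?_⟩
  · exact Set.infinite_of_injective_forall_mem injA (fun n => memA n)
  · rintro γ ⟨a, ha, b, hb, rfl⟩
    rw [prod_pow, U_pow, U_pow, charp, charp, U_zero]
    rfl
  · exact Set.infinite_of_injective_forall_mem injB (fun n => ⟨memB n, rfl⟩)
  · exact Set.infinite_of_injective_forall_mem injA (fun n => ⟨memA n, rfl⟩)
  · refine Set.infinite_of_injective_forall_mem injB (fun n => ⟨memB n, ?_⟩)
    show sl2LNorm p 1 < sl2LNorm p (U p (sB p n))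
    rw [sl2LNorm_one, normB]
    exact norm_sB_gt p n
  · refine Set.infinite_of_injective_forall_mem injA (fun n => ⟨memA n, ?_⟩)
    show sl2LNorm p 1 < sl2LNorm p (U p (sA p n))
    rw [sl2LNorm_one, normA]
    exact norm_sA_gt p n
end
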